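/- arXiv:2509.05744 — 2 statements merged into one kernel-verified Lean document; each statement's English description precedes it below -/
import Mathlib

section
/- Let (Ω, ℱ, P) be an atomless probability space and let X, Y ∈ L¹(Ω, ℱ, P) be arbitrary. Then dist(X, A₂(Y)) = max(0, sup_{p ∈ (0,1]} (F^{(−2)}_Y(p) − F^{(−2)}_X(p))) = max(0, sup_{η ∈ ℝ} (F^{(2)}_X(η) − F^{(2)}_Y(η))). -/
open MeasureTheory Filter Set

noncomputable section

/-- Distribution function `F_Z(η) = P(Z ≤ η)`. -/
def cdfRV {Ω : Type*} [MeasurableSpace Ω] (P : Measure Ω) (Z : Ω → ℝ) (η : ℝ) : ℝ :=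
  (P {ω | Z ω ≤ η}).toReal

/-- Quantile function `F⁻¹_Z(p) = inf {η | F_Z(η) ≥ p}`. -/
def qf {Ω : Type*} [MeasurableSpace Ω] (P : Measure Ω) (Z : Ω → ℝ) (p : ℝ) : ℝ :=
  sInf {η : ℝ | p ≤ cdfRV P Z η}

/-- Absolute Lorenz function `F^{(-2)}_Z(p) = ∫₀^p F⁻¹_Z(t) dt`. -/
def lorenz {Ω : Type*} [MeasurableSpace Ω] (P : Measure Ω) (Z : Ω → ℝ) (p : ℝ) : ℝ :=
  ∫ t in (0:ℝ)..p, qf P Z t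

/-- Shortfall function `F^{(2)}_Z(η) = E[max(η - Z, 0)]`. -/
def shortfall {Ω : Type*} [MeasurableSpace Ω] (P : Measure Ω) (Z : Ω → ℝ) (η : ℝ) : ℝ :=
  ∫ ω, max (η - Z ω) 0 ∂P

/-- Second-order stochastic dominance. -/
def SSD {Ω : Type*} [MeasurableSpace Ω] (P : Measure Ω) (Z Y : Ω → ℝ) : Prop :=
  ∀ η : ℝ, shortfall P Z η ≤ shortfall P Y η

/-- First-order Wasserstein distance. -/
def W1 {Ω : Type*} [MeasurableSpace Ω] (P : Measure Ω) (X Z : Ω → ℝ) : ℝ :=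
  ∫ p in (0:ℝ)..1, |qf P X p - qf P Z p|

/-- Distance from `X` to the set `A₂(Y)` of integrable random variables dominating `Y`
in the second order, in terms of `W₁`. -/
def distA2 {Ω : Type*} [MeasurableSpace Ω] (P : Measure Ω) (X Y : Ω → ℝ) : ℝ :=
  sInf {d : ℝ | ∃ Z : Ω → ℝ, Integrable Z P ∧ SSD P Z Y ∧ d = W1 P X Z}

/-- An atomless probability space. -/
def Atomless {Ω : Type*} [MeasurableSpace Ω] (P : Measure Ω) : Prop :=
  ∀ s : Set Ω, MeasurableSet s → P s ≠ 0 →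
    ∃ t : Set Ω, t ⊆ s ∧ MeasurableSet t ∧ 0 < P t ∧ P t < P s

/-- `r`-th order shortfall transform `F^{(r)}_Z(η) = (1/Γ(r)) E[max(η-Z,0)^{r-1}]`,
with the convention `max(η-z,0)^0 = 𝟙_{z ≤ η}`. -/
def sfr {Ω : Type*} [MeasurableSpace Ω] (P : Measure Ω) (Z : Ω → ℝ) (r η : ℝ) : ℝ :=
  (1 / Real.Gamma r) * ∫ ω, (if Z ω ≤ η then (η - Z ω) ^ (r - 1) else 0) ∂P

/-- `r`-th order stochastic dominance: `Z ≽_{(r)} Y`. -/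
def domR {Ω : Type*} [MeasurableSpace Ω] (P : Measure Ω) (Z Y : Ω → ℝ) (r : ℝ) : Prop :=
  ∀ η : ℝ, sfr P Z r η ≤ sfr P Y r η


namespace Stmt14
set_option linter.unusedSectionVars false

variable {Ω : Type*} [MeasurableSpace Ω] (P : Measure Ω) [IsProbabilityMeasure P] (X : Ω → ℝ)

lemma cdf_nonneg (η : ℝ) : 0 ≤ cdfRV P X η := ENNReal.toReal_nonneg

lemma cdf_le_one (η : ℝ) : cdfRV P X η ≤ 1 := by
  have h := prob_le_one (μ := P) (s := {ω | X ω ≤ η})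
  simpa [cdfRV] using ENNReal.toReal_mono ENNReal.one_ne_top h

lemma cdf_mono : Monotone (cdfRV P X) := by
  intro a b hab
  exact ENNReal.toReal_mono (measure_ne_top _ _)
    (measure_mono (fun ω (h : X ω ≤ a) => h.trans hab))

variable (hm : Measurable X)

include hm in
lemma cdf_tendsto_atBot : Filter.Tendsto (fun n : ℕ => cdfRV P X (-n)) atTop (nhds 0) := by
  have h1 : Filter.Tendsto (fun n : ℕ => P {ω | X ω ≤ -(n:ℝ)}) atTop (nhds (P (⋂ n : ℕ, {ω | X ω ≤ -(n:ℝ)}))) := by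
    apply tendsto_measure_iInter_atTop (fun n => (hm measurableSet_Iic).nullMeasurableSet)
    · intro a b hab ω (h : X ω ≤ -(b:ℝ)); exact h.trans (by exact_mod_cast neg_le_neg (Nat.cast_le.2 hab))
    · exact ⟨0, measure_ne_top _ _⟩
  have h2 : (⋂ n : ℕ, {ω | X ω ≤ -(n:ℝ)}) = ∅ := by
    ext ω; simp only [Set.mem_iInter, Set.mem_setOf_eq, Set.mem_empty_iff_false, iff_false, not_forall]
    obtain ⟨n, hn⟩ := exists_nat_gt (-(X ω))
    exact ⟨n, by push_neg; linarith⟩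
  rw [h2, measure_empty] at h1
  have := (ENNReal.tendsto_toReal (by simp)).comp h1
  simpa [cdfRV, Function.comp_def] using this

include hm in
lemma cdf_tendsto_atTop : Filter.Tendsto (fun n : ℕ => cdfRV P X n) atTop (nhds 1) := by
  have h1 : Filter.Tendsto (fun n : ℕ => P {ω | X ω ≤ (n:ℝ)}) atTop (nhds (P (⋃ n : ℕ, {ω | X ω ≤ (n:ℝ)}))) := by
    apply tendsto_measure_iUnion_atTop
    intro a b hab ω (h : X ω ≤ (a:ℝ)); exact h.trans (by exact_mod_cast hab)
  have h2 : (⋃ n : ℕ, {ω | X ω ≤ (n:ℝ)}) = Set.univ := by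
    ext ω; simp only [Set.mem_iUnion, Set.mem_setOf_eq, Set.mem_univ, iff_true]
    obtain ⟨n, hn⟩ := exists_nat_gt (X ω)
    exact ⟨n, hn.le⟩
  rw [h2, measure_univ] at h1
  have := (ENNReal.tendsto_toReal (by simp)).comp h1
  simpa [cdfRV, Function.comp_def] using this

include hm in
/-- The set whose infimum defines the quantile. -/
lemma bddBelow_qset {p : ℝ} (hp : 0 < p) : BddBelow {η : ℝ | p ≤ cdfRV P X η} := by
  have := (cdf_tendsto_atBot P X hm).eventually (eventually_lt_nhds hp)
  obtain ⟨n, hn⟩ := this.exists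
  refine ⟨-(n:ℝ), fun η hη => ?_⟩
  by_contra hlt
  push_neg at hlt
  exact absurd (le_trans hη (cdf_mono P X hlt.le)) (not_le.2 hn)

include hm in
lemma nonempty_qset {p : ℝ} (hp : p < 1) : {η : ℝ | p ≤ cdfRV P X η}.Nonempty := by
  have := (cdf_tendsto_atTop P X hm).eventually (eventually_gt_nhds hp)
  obtain ⟨n, hn⟩ := this.exists
  exact ⟨n, hn.le⟩

include hm in
lemma isClosed_qset (p : ℝ) : IsClosed {η : ℝ | p ≤ cdfRV P X η} := by
  rw [← isOpen_compl_iff]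
  rw [isOpen_iff_mem_nhds]
  intro η₀ hη₀
  simp only [Set.mem_compl_iff, Set.mem_setOf_eq, not_le] at hη₀
  -- right continuity: P{X ≤ η₀} = ⨅ n, P{X ≤ η₀ + 1/(n+1)}
  have h1 : Filter.Tendsto (fun n : ℕ => P {ω | X ω ≤ η₀ + 1/(n+1)}) atTop (nhds (P (⋂ n : ℕ, {ω | X ω ≤ η₀ + 1/(n+1)}))) := by
    apply tendsto_measure_iInter_atTop (fun n => (hm measurableSet_Iic).nullMeasurableSet)
    · intro a b hab ω (h : X ω ≤ η₀ + 1/(b+1))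
      have : (a:ℝ) ≤ b := by exact_mod_cast hab
      refine h.trans (by gcongr)
    · exact ⟨0, measure_ne_top _ _⟩
  have h2 : (⋂ n : ℕ, {ω | X ω ≤ η₀ + 1/(n+1)}) = {ω | X ω ≤ η₀} := by
    ext ω
    simp only [Set.mem_iInter, Set.mem_setOf_eq]
    constructor
    · intro h
      by_contra hlt
      push_neg at hlt
      obtain ⟨n, hn⟩ := exists_nat_one_div_lt (sub_pos.2 hlt)
      have h2 := h n
      have h3 : (0:ℝ) < (n:ℝ)+1 := by positivity
      linarith
    · intro h n
      have h3 : (0:ℝ) < 1/((n:ℝ)+1) := by positivity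
      linarith
  rw [h2] at h1
  have h3 := (ENNReal.tendsto_toReal (measure_ne_top P _)).comp h1
  have h4 : Filter.Tendsto (fun n : ℕ => cdfRV P X (η₀ + 1/(n+1))) atTop (nhds (cdfRV P X η₀)) := h3
  obtain ⟨n, hn⟩ := (h4.eventually (eventually_lt_nhds hη₀)).exists
  have h5 : (0:ℝ) < 1/((n:ℝ)+1) := by positivity
  refine Filter.mem_of_superset (Iio_mem_nhds (show η₀ < η₀ + 1/((n:ℕ)+1) by linarith)) ?_
  intro η (hη : η < _)
  simp only [Set.mem_compl_iff, Set.mem_setOf_eq, not_le]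
  exact lt_of_le_of_lt (cdf_mono P X hη.le) hn

include hm in
lemma qf_mem {p : ℝ} (hp : 0 < p) (hp1 : p < 1) : p ≤ cdfRV P X (qf P X p) :=
  (isClosed_qset P X hm p).csInf_mem (nonempty_qset P X hm hp1) (bddBelow_qset P X hm hp)

include hm in
lemma qf_le_iff {p : ℝ} (hp : 0 < p) (hp1 : p < 1) {v : ℝ} :
    qf P X p ≤ v ↔ p ≤ cdfRV P X v := by
  constructor
  · intro h
    exact (qf_mem P X hm hp hp1).trans (cdf_mono P X h)
  · intro h
    exact csInf_le (bddBelow_qset P X hm hp) h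

include hm in
lemma qf_monotoneOn : MonotoneOn (qf P X) (Set.Ioo 0 1) := by
  intro a ha b hb hab
  exact csInf_le_csInf (bddBelow_qset P X hm ha.1) (nonempty_qset P X hm hb.2)
    (fun η hη => le_trans hab hη)

include hm in
lemma qf_aemeasurable :
    AEMeasurable (qf P X) (volume.restrict (Set.Ioo (0:ℝ) 1)) :=
  aemeasurable_restrict_of_monotoneOn measurableSet_Ioo (qf_monotoneOn P X hm)

include hm in
/-- L4: the level sets of the quantile function have the right measure. -/
lemma meas_qf_le (v : ℝ) :
    volume {p ∈ Set.Ioo (0:ℝ) 1 | qf P X p ≤ v} = P {ω | X ω ≤ v} := by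
  have hset : {p ∈ Set.Ioo (0:ℝ) 1 | qf P X p ≤ v} = Set.Ioo 0 1 ∩ Set.Iic (cdfRV P X v) := by
    ext p
    simp only [Set.mem_setOf_eq, Set.mem_inter_iff, Set.mem_Ioo, Set.mem_Iic]
    constructor
    · rintro ⟨hp, hle⟩
      exact ⟨hp, (qf_le_iff P X hm hp.1 hp.2).1 hle⟩
    · rintro ⟨hp, hle⟩
      exact ⟨hp, (qf_le_iff P X hm hp.1 hp.2).2 hle⟩
  rw [hset]
  have h0 : 0 ≤ cdfRV P X v := cdf_nonneg P X v
  have h1 : cdfRV P X v ≤ 1 := cdf_le_one P X v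
  have : volume (Set.Ioo (0:ℝ) 1 ∩ Set.Iic (cdfRV P X v)) = ENNReal.ofReal (cdfRV P X v) := by
    rcases eq_or_lt_of_le h1 with h1' | h1'
    · have : Set.Ioo (0:ℝ) 1 ∩ Set.Iic (cdfRV P X v) = Set.Ioo (0:ℝ) 1 := by
        rw [Set.inter_eq_left]; intro x hx; exact le_of_lt (h1' ▸ hx.2)
      rw [this, Real.volume_Ioo, h1']; simp
    · have : Set.Ioo (0:ℝ) 1 ∩ Set.Iic (cdfRV P X v) = Set.Ioc (0:ℝ) (cdfRV P X v) := by
        ext x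
        simp only [Set.mem_inter_iff, Set.mem_Ioo, Set.mem_Iic, Set.mem_Ioc]
        exact ⟨fun ⟨h1, h2⟩ => ⟨h1.1, h2⟩, fun ⟨h1, h2⟩ => ⟨⟨h1, lt_of_le_of_lt h2 h1'⟩, h2⟩⟩
      rw [this, Real.volume_Ioc]; simp
  rw [this, cdfRV, ENNReal.ofReal_toReal (measure_ne_top _ _)]

include hm in
lemma meas_qf_lt (v : ℝ) :
    volume {p ∈ Set.Ioo (0:ℝ) 1 | qf P X p < v} = P {ω | X ω < v} := by
  have hA : {p ∈ Set.Ioo (0:ℝ) 1 | qf P X p < v} = ⋃ n : ℕ, {p ∈ Set.Ioo (0:ℝ) 1 | qf P X p ≤ v - 1/(n+1)} := by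
    ext p
    simp only [Set.mem_setOf_eq, Set.mem_iUnion]
    constructor
    · rintro ⟨hp, hlt⟩
      obtain ⟨n, hn⟩ := exists_nat_one_div_lt (sub_pos.2 hlt)
      exact ⟨n, hp, by linarith⟩
    · rintro ⟨n, hp, hle⟩
      have h3 : (0:ℝ) < 1/((n:ℝ)+1) := by positivity
      exact ⟨hp, by linarith⟩
  have hB : {ω | X ω < v} = ⋃ n : ℕ, {ω | X ω ≤ v - 1/(n+1)} := by
    ext ω
    simp only [Set.mem_setOf_eq, Set.mem_iUnion]
    constructor
    · intro hlt
      obtain ⟨n, hn⟩ := exists_nat_one_div_lt (sub_pos.2 hlt)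
      exact ⟨n, by linarith⟩
    · rintro ⟨n, hle⟩
      have h3 : (0:ℝ) < 1/((n:ℝ)+1) := by positivity
      linarith
  have hmono : ∀ (s : ℝ → ℝ → Prop), True := fun _ => trivial
  rw [hA, hB]
  rw [Directed.measure_iUnion, Directed.measure_iUnion]
  · refine iSup_congr (fun n => meas_qf_le P X hm _)
  · apply Monotone.directed_le
    intro a b hab ω (h : X ω ≤ _)
    refine Set.mem_setOf_eq ▸ h.trans (by
      have : (a:ℝ) ≤ b := by exact_mod_cast hab
      have ha : (0:ℝ) < (a:ℝ)+1 := by positivity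
      have hb : (0:ℝ) < (b:ℝ)+1 := by positivity
      rw [sub_le_sub_iff_left]
      exact one_div_le_one_div_of_le ha (by linarith))
  · apply Monotone.directed_le
    intro a b hab p hp
    simp only [Set.mem_setOf_eq] at hp ⊢
    refine ⟨hp.1, hp.2.trans (by
      have : (a:ℝ) ≤ b := by exact_mod_cast hab
      have ha : (0:ℝ) < (a:ℝ)+1 := by positivity
      rw [sub_le_sub_iff_left]
      exact one_div_le_one_div_of_le ha (by linarith))⟩

include hm in
lemma qset_eq (v : ℝ) :
    {p ∈ Set.Ioo (0:ℝ) 1 | qf P X p ≤ v} = Set.Ioo 0 1 ∩ Set.Iic (cdfRV P X v) := by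
  ext p
  simp only [Set.mem_setOf_eq, Set.mem_inter_iff, Set.mem_Ioo, Set.mem_Iic]
  exact ⟨fun ⟨hp, hle⟩ => ⟨hp, (qf_le_iff P X hm hp.1 hp.2).1 hle⟩,
    fun ⟨hp, hle⟩ => ⟨hp, (qf_le_iff P X hm hp.1 hp.2).2 hle⟩⟩

include hm in
lemma meas_qf_gt (v : ℝ) :
    volume {p ∈ Set.Ioo (0:ℝ) 1 | v < qf P X p} = P {ω | v < X ω} := by
  have h0 : 0 ≤ cdfRV P X v := cdf_nonneg P X v
  have h1 : cdfRV P X v ≤ 1 := cdf_le_one P X v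
  have hset : {p ∈ Set.Ioo (0:ℝ) 1 | v < qf P X p} = Set.Ioo (cdfRV P X v) 1 := by
    ext p
    simp only [Set.mem_setOf_eq, Set.mem_Ioo]
    constructor
    · rintro ⟨hp, hlt⟩
      refine ⟨?_, hp.2⟩
      by_contra hle
      push_neg at hle
      exact absurd ((qf_le_iff P X hm hp.1 hp.2).2 hle) (not_le.2 hlt)
    · rintro ⟨hgt, hlt⟩
      have hp : p ∈ Set.Ioo (0:ℝ) 1 := ⟨lt_of_le_of_lt h0 hgt, hlt⟩
      refine ⟨hp, ?_⟩
      by_contra hle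
      push_neg at hle
      exact absurd ((qf_le_iff P X hm hp.1 hp.2).1 hle) (not_le.2 hgt)
  rw [hset, Real.volume_Ioo]
  have hcompl : {ω | v < X ω} = {ω | X ω ≤ v}ᶜ := by
    ext ω; simp [not_le]
  have hc : P {ω | v < X ω} = 1 - P {ω | X ω ≤ v} := by
    rw [hcompl]
    rw [measure_compl (measurableSet_le hm measurable_const) (measure_ne_top _ _), measure_univ]
  rw [hc, ENNReal.ofReal_sub _ h0, ENNReal.ofReal_one, cdfRV,
    ENNReal.ofReal_toReal (measure_ne_top _ _)]

include hm in
lemma lint_shortfall (η : ℝ) :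
    ∫⁻ p in Set.Ioo (0:ℝ) 1, ENNReal.ofReal (max (η - qf P X p) 0) =
      ∫⁻ ω, ENNReal.ofReal (max (η - X ω) 0) ∂P := by
  have e1 := lintegral_eq_lintegral_meas_lt (f := fun p : ℝ => max (η - qf P X p) 0)
    (volume.restrict (Set.Ioo (0:ℝ) 1))
    (Filter.Eventually.of_forall fun p => le_max_right _ _)
    (((qf_aemeasurable P X hm).const_sub η).max aemeasurable_const)
  have e2 := lintegral_eq_lintegral_meas_lt (f := fun ω => max (η - X ω) 0) P
    (Filter.Eventually.of_forall fun ω => le_max_right _ _)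
    ((hm.const_sub η).max measurable_const).aemeasurable
  rw [e1, e2]
  apply setLIntegral_congr_fun measurableSet_Ioi
  refine (fun t ht => ?_); beta_reduce
  have ht' : (0:ℝ) < t := ht
  have hs1 : {p : ℝ | t < max (η - qf P X p) 0} = {p | qf P X p < η - t} := by
    ext p
    simp only [Set.mem_setOf_eq, lt_max_iff]
    constructor
    · rintro (h | h)
      · linarith
      · linarith
    · intro h; left; linarith
  have hs2 : {ω | t < max (η - X ω) 0} = {ω | X ω < η - t} := by
    ext ω
    simp only [Set.mem_setOf_eq, lt_max_iff]
    constructor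
    · rintro (h | h)
      · linarith
      · linarith
    · intro h; left; linarith
  rw [hs1, hs2, Measure.restrict_apply' measurableSet_Ioo]
  rw [show {p | qf P X p < η - t} ∩ Set.Ioo (0:ℝ) 1 = {p ∈ Set.Ioo (0:ℝ) 1 | qf P X p < η - t} by
    ext p; simp only [Set.mem_inter_iff, Set.mem_setOf_eq]; tauto]
  exact meas_qf_lt P X hm (η - t)

include hm in
lemma lint_excess (η : ℝ) :
    ∫⁻ p in Set.Ioo (0:ℝ) 1, ENNReal.ofReal (max (qf P X p - η) 0) =
      ∫⁻ ω, ENNReal.ofReal (max (X ω - η) 0) ∂P := by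
  have e1 := lintegral_eq_lintegral_meas_lt (f := fun p : ℝ => max (qf P X p - η) 0)
    (volume.restrict (Set.Ioo (0:ℝ) 1))
    (Filter.Eventually.of_forall fun p => le_max_right _ _)
    (((qf_aemeasurable P X hm).sub_const η).max aemeasurable_const)
  have e2 := lintegral_eq_lintegral_meas_lt (f := fun ω => max (X ω - η) 0) P
    (Filter.Eventually.of_forall fun ω => le_max_right _ _)
    ((hm.sub_const η).max measurable_const).aemeasurable
  rw [e1, e2]
  apply setLIntegral_congr_fun measurableSet_Ioi
  refine (fun t ht => ?_); beta_reduce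
  have ht' : (0:ℝ) < t := ht
  have hs1 : {p : ℝ | t < max (qf P X p - η) 0} = {p | η + t < qf P X p} := by
    ext p
    simp only [Set.mem_setOf_eq, lt_max_iff]
    constructor
    · rintro (h | h)
      · linarith
      · linarith
    · intro h; left; linarith
  have hs2 : {ω | t < max (X ω - η) 0} = {ω | η + t < X ω} := by
    ext ω
    simp only [Set.mem_setOf_eq, lt_max_iff]
    constructor
    · rintro (h | h)
      · linarith
      · linarith
    · intro h; left; linarith
  rw [hs1, hs2, Measure.restrict_apply' measurableSet_Ioo]
  rw [show {p | η + t < qf P X p} ∩ Set.Ioo (0:ℝ) 1 = {p ∈ Set.Ioo (0:ℝ) 1 | η + t < qf P X p} by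
    ext p; simp only [Set.mem_inter_iff, Set.mem_setOf_eq]; tauto]
  exact meas_qf_gt P X hm (η + t)

variable (hi : Integrable X P)

include hi in
lemma integrable_shortfall_P (η : ℝ) : Integrable (fun ω => max (η - X ω) 0) P := by
  simpa using ((integrable_const η).sub hi).pos_part

include hi in
lemma integrable_excess_P (η : ℝ) : Integrable (fun ω => max (X ω - η) 0) P := by
  simpa using (hi.sub (integrable_const η)).pos_part

include hm hi in
lemma integrableOn_sfq (η : ℝ) :
    IntegrableOn (fun p => max (η - qf P X p) 0) (Set.Ioo (0:ℝ) 1) := by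
  constructor
  · exact (((qf_aemeasurable P X hm).const_sub η).max aemeasurable_const).aestronglyMeasurable
  · have i1 := hasFiniteIntegral_iff_ofReal (μ := volume.restrict (Set.Ioo (0:ℝ) 1))
      (f := fun p => max (η - qf P X p) 0) (Filter.Eventually.of_forall fun p => le_max_right _ _)
    have i2 := hasFiniteIntegral_iff_ofReal (μ := P)
      (f := fun ω => max (η - X ω) 0) (Filter.Eventually.of_forall fun ω => le_max_right _ _)
    rw [i1, lint_shortfall P X hm η, ← i2]
    exact (integrable_shortfall_P P X hi η).hasFiniteIntegral

include hm hi in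
lemma integrableOn_exq (η : ℝ) :
    IntegrableOn (fun p => max (qf P X p - η) 0) (Set.Ioo (0:ℝ) 1) := by
  constructor
  · exact (((qf_aemeasurable P X hm).sub_const η).max aemeasurable_const).aestronglyMeasurable
  · have i1 := hasFiniteIntegral_iff_ofReal (μ := volume.restrict (Set.Ioo (0:ℝ) 1))
      (f := fun p => max (qf P X p - η) 0) (Filter.Eventually.of_forall fun p => le_max_right _ _)
    have i2 := hasFiniteIntegral_iff_ofReal (μ := P)
      (f := fun ω => max (X ω - η) 0) (Filter.Eventually.of_forall fun ω => le_max_right _ _)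
    rw [i1, lint_excess P X hm η, ← i2]
    exact (integrable_excess_P P X hi η).hasFiniteIntegral

include hm hi in
/-- The fundamental quantile-transform identity for the shortfall. -/
lemma integral_sfq (η : ℝ) :
    ∫ p in Set.Ioo (0:ℝ) 1, max (η - qf P X p) 0 = shortfall P X η := by
  have i1 := integral_eq_lintegral_of_nonneg_ae (μ := volume.restrict (Set.Ioo (0:ℝ) 1))
    (f := fun p => max (η - qf P X p) 0) (Filter.Eventually.of_forall fun p => le_max_right _ _)
    (((qf_aemeasurable P X hm).const_sub η).max aemeasurable_const).aestronglyMeasurable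
  have i2 := integral_eq_lintegral_of_nonneg_ae (μ := P)
    (f := fun ω => max (η - X ω) 0) (Filter.Eventually.of_forall fun ω => le_max_right _ _)
    ((hm.const_sub η).max measurable_const).aestronglyMeasurable
  rw [shortfall, i1, i2, lint_shortfall P X hm η]

include hm hi in
lemma integral_exq (η : ℝ) :
    ∫ p in Set.Ioo (0:ℝ) 1, max (qf P X p - η) 0 = ∫ ω, max (X ω - η) 0 ∂P := by
  have i1 := integral_eq_lintegral_of_nonneg_ae (μ := volume.restrict (Set.Ioo (0:ℝ) 1))
    (f := fun p => max (qf P X p - η) 0) (Filter.Eventually.of_forall fun p => le_max_right _ _)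
    (((qf_aemeasurable P X hm).sub_const η).max aemeasurable_const).aestronglyMeasurable
  have i2 := integral_eq_lintegral_of_nonneg_ae (μ := P)
    (f := fun ω => max (X ω - η) 0) (Filter.Eventually.of_forall fun ω => le_max_right _ _)
    ((hm.sub_const η).max measurable_const).aestronglyMeasurable
  rw [i1, i2, lint_excess P X hm η]

include hm hi in
lemma integrableOn_qf : IntegrableOn (qf P X) (Set.Ioo (0:ℝ) 1) := by
  have h1 := integrableOn_exq P X hm hi 0
  have h2 := integrableOn_sfq P X hm hi 0
  have : (fun p => max (qf P X p - 0) 0 - max (0 - qf P X p) 0) = qf P X := by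
    funext p
    rcases le_total (qf P X p) 0 with h | h
    · rw [max_eq_right (by linarith), max_eq_left (by linarith)]; ring
    · rw [max_eq_left (by linarith), max_eq_right (by linarith)]; ring
  refine (h1.sub h2).congr ?_
  refine Filter.Eventually.of_forall (fun p => ?_)
  have := congrFun this p
  simpa using this

include hm hi in
lemma integral_qf : ∫ p in Set.Ioo (0:ℝ) 1, qf P X p = ∫ ω, X ω ∂P := by
  have h1 := integrableOn_exq P X hm hi 0
  have h2 := integrableOn_sfq P X hm hi 0
  have key : (fun p => max (qf P X p - 0) 0 - max (0 - qf P X p) 0) = qf P X := by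
    funext p
    rcases le_total (qf P X p) 0 with h | h
    · rw [max_eq_right (by linarith), max_eq_left (by linarith)]; ring
    · rw [max_eq_left (by linarith), max_eq_right (by linarith)]; ring
  have keyP : (fun ω => max (X ω - 0) 0 - max (0 - X ω) 0) = X := by
    funext ω
    rcases le_total (X ω) 0 with h | h
    · rw [max_eq_right (by linarith), max_eq_left (by linarith)]; ring
    · rw [max_eq_left (by linarith), max_eq_right (by linarith)]; ring
  calc ∫ p in Set.Ioo (0:ℝ) 1, qf P X p
      = ∫ p in Set.Ioo (0:ℝ) 1, (max (qf P X p - 0) 0 - max (0 - qf P X p) 0) := by rw [key]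
    _ = (∫ p in Set.Ioo (0:ℝ) 1, max (qf P X p - 0) 0) - ∫ p in Set.Ioo (0:ℝ) 1, max (0 - qf P X p) 0 :=
        integral_sub h1 h2
    _ = (∫ ω, max (X ω - 0) 0 ∂P) - ∫ ω, max (0 - X ω) 0 ∂P := by
        rw [integral_exq P X hm hi 0, integral_sfq P X hm hi 0, shortfall]
    _ = ∫ ω, (max (X ω - 0) 0 - max (0 - X ω) 0) ∂P :=
        (integral_sub (integrable_excess_P P X hi 0) (integrable_shortfall_P P X hi 0)).symm
    _ = ∫ ω, X ω ∂P := by rw [keyP]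

lemma lorenz_eq (p : ℝ) (hp : 0 ≤ p) :
    lorenz P X p = ∫ t in Set.Ioo (0:ℝ) p, qf P X t := by
  rw [lorenz, intervalIntegral.integral_of_le hp]
  exact (setIntegral_congr_set (Ioo_ae_eq_Ioc)).symm

include hm hi in
lemma young {p : ℝ} (hp : p ∈ Set.Ioc (0:ℝ) 1) (η : ℝ) :
    p * η - lorenz P X p ≤ shortfall P X η := by
  have h1 : ∫ t in Set.Ioo (0:ℝ) p, max (η - qf P X t) 0 ≤ ∫ t in Set.Ioo (0:ℝ) 1, max (η - qf P X t) 0 := by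
    apply setIntegral_mono_set (integrableOn_sfq P X hm hi η)
    · exact Filter.Eventually.of_forall (fun t => le_max_right _ _)
    · exact HasSubset.Subset.eventuallyLE (Set.Ioo_subset_Ioo le_rfl hp.2)
  have hqint : IntegrableOn (qf P X) (Set.Ioo (0:ℝ) p) :=
    (integrableOn_qf P X hm hi).mono_set (Set.Ioo_subset_Ioo le_rfl hp.2)
  have h2 : ∫ t in Set.Ioo (0:ℝ) p, (η - qf P X t) ≤ ∫ t in Set.Ioo (0:ℝ) p, max (η - qf P X t) 0 := by
    apply integral_mono ((integrable_const η).sub hqint)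
    · exact (integrableOn_sfq P X hm hi η).mono_set (Set.Ioo_subset_Ioo le_rfl hp.2)
    · exact fun t => le_max_left _ _
  have h3 : ∫ t in Set.Ioo (0:ℝ) p, (η - qf P X t) = p * η - lorenz P X p := by
    rw [integral_sub (integrable_const η) hqint, setIntegral_const, lorenz_eq P X p hp.1.le]
    rw [Real.volume_real_Ioo_of_le hp.1.le, sub_zero, smul_eq_mul]
  rw [← integral_sfq P X hm hi η]
  calc p * η - lorenz P X p = ∫ t in Set.Ioo (0:ℝ) p, (η - qf P X t) := h3.symm
    _ ≤ ∫ t in Set.Ioo (0:ℝ) p, max (η - qf P X t) 0 := h2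
    _ ≤ _ := h1

include hm in
lemma phat_lt {η : ℝ} {p : ℝ} (hp : p ∈ Set.Ioo (0:ℝ) 1)
    (hlt : p < (P {ω | X ω < η}).toReal) : qf P X p < η := by
  by_contra hle
  push_neg at hle
  have hS : {t ∈ Set.Ioo (0:ℝ) 1 | qf P X t < η} ⊆ Set.Ioo 0 p := by
    intro t ⟨ht, hqt⟩
    refine ⟨ht.1, ?_⟩
    by_contra h
    push_neg at h
    exact absurd (lt_of_le_of_lt (hle.trans (qf_monotoneOn P X hm hp ht h)) hqt) (lt_irrefl _)
  have hmeas := measure_mono (μ := (volume : Measure ℝ)) hS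
  rw [meas_qf_lt P X hm η, Real.volume_Ioo, sub_zero] at hmeas
  have h2 : (P {ω | X ω < η}).toReal ≤ p := by
    have h3 := ENNReal.toReal_mono ENNReal.ofReal_ne_top hmeas
    rwa [ENNReal.toReal_ofReal hp.1.le] at h3
  linarith

include hm in
lemma phat_gt {η : ℝ} {p : ℝ} (hp : p ∈ Set.Ioo (0:ℝ) 1)
    (hgt : (P {ω | X ω < η}).toReal < p) : η ≤ qf P X p := by
  by_contra hlt
  push_neg at hlt
  have hS : Set.Ioo (0:ℝ) p ⊆ {t ∈ Set.Ioo (0:ℝ) 1 | qf P X t < η} := by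
    intro t ht
    have ht1 : t ∈ Set.Ioo (0:ℝ) 1 := ⟨ht.1, ht.2.trans hp.2⟩
    exact ⟨ht1, lt_of_le_of_lt (qf_monotoneOn P X hm ht1 hp ht.2.le) hlt⟩
  have hmeas := measure_mono (μ := (volume : Measure ℝ)) hS
  rw [meas_qf_lt P X hm η, Real.volume_Ioo, sub_zero] at hmeas
  have h2 : p ≤ (P {ω | X ω < η}).toReal := by
    have h3 := ENNReal.toReal_mono (measure_ne_top _ _) hmeas
    rwa [ENNReal.toReal_ofReal hp.1.le] at h3
  linarith

include hm hi in
/-- conjugacy: the shortfall is attained at `p̂ = P(X < η)`. -/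
lemma shortfall_attained (η : ℝ) :
    shortfall P X η = (P {ω | X ω < η}).toReal * η - lorenz P X ((P {ω | X ω < η}).toReal) := by
  set ph := (P {ω | X ω < η}).toReal with hph
  have hph0 : 0 ≤ ph := ENNReal.toReal_nonneg
  have hph1 : ph ≤ 1 := by
    rw [hph]
    have := prob_le_one (μ := P) (s := {ω | X ω < η})
    exact (ENNReal.toReal_le_toReal (measure_ne_top _ _) ENNReal.one_ne_top).2 this |>.trans (by simp)
  have hsplit : Set.Ioo (0:ℝ) 1 = Set.Ioo 0 ph ∪ (Set.Ioo 0 1 ∩ Set.Ici ph) := by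
    ext t
    simp only [Set.mem_union, Set.mem_Ioo, Set.mem_inter_iff, Set.mem_Ici]
    constructor
    · intro ht
      rcases lt_or_ge t ph with h | h
      · exact Or.inl ⟨ht.1, h⟩
      · exact Or.inr ⟨ht, h⟩
    · rintro (⟨h1, h2⟩ | ⟨h1, _⟩)
      · exact ⟨h1, lt_of_lt_of_le h2 hph1⟩
      · exact h1
  have hdisj : Disjoint (Set.Ioo (0:ℝ) ph) (Set.Ioo 0 1 ∩ Set.Ici ph) := by
    rw [Set.disjoint_left]
    rintro t ⟨_, h2⟩ ⟨_, h3⟩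
    exact absurd h3 (not_le.2 h2)
  have hIoosub : Set.Ioo (0:ℝ) ph ⊆ Set.Ioo 0 1 := Set.Ioo_subset_Ioo le_rfl hph1
  rw [← integral_sfq P X hm hi η, hsplit,
    setIntegral_union hdisj (measurableSet_Ioo.inter measurableSet_Ici)
      ((integrableOn_sfq P X hm hi η).mono_set hIoosub)
      ((integrableOn_sfq P X hm hi η).mono_set Set.inter_subset_left)]
  have hz : ∫ t in Set.Ioo (0:ℝ) 1 ∩ Set.Ici ph, max (η - qf P X t) 0 = 0 := by
    have hae : ((Set.Ioo (0:ℝ) 1 ∩ Set.Ici ph : Set ℝ)) =ᵐ[(volume : Measure ℝ)] ((Set.Ioo (0:ℝ) 1 ∩ Set.Ioi ph : Set ℝ)) := by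
      rw [MeasureTheory.ae_eq_set]
      constructor
      · refine measure_mono_null (fun x hx => ?_) (measure_singleton ph)
        obtain ⟨⟨hx1, hx2⟩, hx3⟩ := hx
        simp only [Set.mem_inter_iff, Set.mem_Ioo, Set.mem_Ioi, not_and, not_lt] at hx3
        have : x ≤ ph := hx3 ⟨hx1.1, hx1.2⟩
        exact Set.mem_singleton_iff.2 (le_antisymm this hx2)
      · refine measure_mono_null (fun x hx => ?_) (measure_empty (μ := (volume : Measure ℝ)))
        obtain ⟨⟨hx1, hx2⟩, hx3⟩ := hx
        exact absurd ⟨hx1, (show ph < x from hx2).le⟩ hx3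
    rw [setIntegral_congr_set hae]
    rw [setIntegral_congr_fun (measurableSet_Ioo.inter measurableSet_Ioi)
      (g := fun _ => (0:ℝ)) ?_, integral_zero]
    rintro t ⟨ht1, ht2⟩
    have := phat_gt P X hm ht1 ht2
    simp only
    rw [max_eq_right (by linarith)]
  rw [hz, add_zero]
  rw [setIntegral_congr_fun measurableSet_Ioo (g := fun t => η - qf P X t) ?_]
  · rw [integral_sub (integrable_const η) ((integrableOn_qf P X hm hi).mono_set hIoosub),
      setIntegral_const, Real.volume_real_Ioo_of_le hph0, sub_zero, smul_eq_mul,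
      lorenz_eq P X ph hph0]
  · intro t ht
    have ht1 : t ∈ Set.Ioo (0:ℝ) 1 := hIoosub ht
    have := phat_lt P X hm ht1 ht.2
    simp only
    rw [max_eq_left (by linarith)]

include hm hi in
/-- conjugacy: the Lorenz function is attained at `η = qf p`. -/
lemma lorenz_attained {p : ℝ} (hp : p ∈ Set.Ioo (0:ℝ) 1) :
    lorenz P X p = p * qf P X p - shortfall P X (qf P X p) := by
  set η := qf P X p with hη
  set ph := (P {ω | X ω < η}).toReal with hph
  have hph0 : 0 ≤ ph := ENNReal.toReal_nonneg
  have hphle : ph ≤ p := by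
    by_contra h
    push_neg at h
    exact absurd (phat_lt P X hm hp h) (lt_irrefl _)
  have hqconst : ∀ t ∈ Set.Ioo ph p, qf P X t = η := by
    intro t ht
    have ht1 : t ∈ Set.Ioo (0:ℝ) 1 := ⟨lt_of_le_of_lt hph0 ht.1, ht.2.trans hp.2⟩
    have h1 : η ≤ qf P X t := phat_gt P X hm ht1 ht.1
    have h2 : qf P X t ≤ η := qf_monotoneOn P X hm ht1 hp ht.2.le
    linarith
  have hsplit : Set.Ioo (0:ℝ) p = Set.Ioo 0 ph ∪ (Set.Ioo 0 p ∩ Set.Ici ph) := by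
    ext t
    simp only [Set.mem_union, Set.mem_Ioo, Set.mem_inter_iff, Set.mem_Ici]
    constructor
    · intro ht
      rcases lt_or_ge t ph with h | h
      · exact Or.inl ⟨ht.1, h⟩
      · exact Or.inr ⟨ht, h⟩
    · rintro (⟨h1, h2⟩ | ⟨h1, _⟩)
      · exact ⟨h1, lt_of_lt_of_le h2 hphle⟩
      · exact h1
  have hdisj : Disjoint (Set.Ioo (0:ℝ) ph) (Set.Ioo 0 p ∩ Set.Ici ph) := by
    rw [Set.disjoint_left]
    rintro t ⟨_, h2⟩ ⟨_, h3⟩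
    exact absurd h3 (not_le.2 h2)
  have hsub1 : Set.Ioo (0:ℝ) ph ⊆ Set.Ioo 0 1 := Set.Ioo_subset_Ioo le_rfl (hphle.trans hp.2.le)
  have hsub2 : Set.Ioo (0:ℝ) p ⊆ Set.Ioo 0 1 := Set.Ioo_subset_Ioo le_rfl hp.2.le
  have hq1 : IntegrableOn (qf P X) (Set.Ioo (0:ℝ) ph) := (integrableOn_qf P X hm hi).mono_set hsub1
  have hq2 : IntegrableOn (qf P X) (Set.Ioo (0:ℝ) p ∩ Set.Ici ph) :=
    (integrableOn_qf P X hm hi).mono_set (Set.inter_subset_left.trans hsub2)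
  have hsecond : ∫ t in Set.Ioo (0:ℝ) p ∩ Set.Ici ph, qf P X t = (p - ph) * η := by
    have hae : ((Set.Ioo (0:ℝ) p ∩ Set.Ici ph : Set ℝ)) =ᵐ[(volume : Measure ℝ)] ((Set.Ioo (ph:ℝ) p : Set ℝ)) := by
      rw [MeasureTheory.ae_eq_set]
      constructor
      · refine measure_mono_null (fun x hx => ?_) (measure_singleton ph)
        obtain ⟨⟨hx1, hx2⟩, hx3⟩ := hx
        simp only [Set.mem_Ioo, not_and, not_lt] at hx3
        have hxph : x ≤ ph := by
          by_contra hc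
          push_neg at hc
          exact absurd hx1.2 (not_lt.2 (hx3 hc))
        exact Set.mem_singleton_iff.2 (le_antisymm hxph hx2)
      · refine measure_mono_null (fun x hx => ?_) (measure_empty (μ := (volume : Measure ℝ)))
        obtain ⟨⟨hx1, hx2⟩, hx3⟩ := hx
        exact absurd ⟨⟨lt_of_le_of_lt hph0 hx1, hx2⟩, hx1.le⟩ hx3
    rw [setIntegral_congr_set hae]
    rw [setIntegral_congr_fun measurableSet_Ioo (g := fun _ => η) (fun t ht => hqconst t ht)]
    rw [setIntegral_const, Real.volume_real_Ioo_of_le (by linarith), smul_eq_mul]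
  have hfirst : ∫ t in Set.Ioo (0:ℝ) ph, qf P X t = ph * η - shortfall P X η := by
    have := shortfall_attained P X hm hi η
    rw [lorenz_eq P X ph hph0] at this
    linarith
  rw [lorenz_eq P X p hp.1.le, hsplit,
    setIntegral_union hdisj (measurableSet_Ioo.inter measurableSet_Ici) hq1 hq2,
    hfirst, hsecond]
  ring

omit [IsProbabilityMeasure P] in
lemma cdf_congr {X' : Ω → ℝ} (h : X =ᵐ[P] X') : cdfRV P X = cdfRV P X' := by
  funext η
  have : {ω | X ω ≤ η} =ᵐ[P] {ω | X' ω ≤ η} := by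
    filter_upwards [h] with ω hω
    show (X ω ≤ η) = (X' ω ≤ η)
    rw [hω]
  rw [cdfRV, cdfRV, measure_congr this]

omit [IsProbabilityMeasure P] in
lemma qf_congr {X' : Ω → ℝ} (h : X =ᵐ[P] X') : qf P X = qf P X' := by
  funext p
  rw [qf, qf, cdf_congr P X h]

omit [IsProbabilityMeasure P] in
lemma lorenz_congr {X' : Ω → ℝ} (h : X =ᵐ[P] X') : lorenz P X = lorenz P X' := by
  funext p
  rw [lorenz, lorenz, qf_congr P X h]

omit [IsProbabilityMeasure P] in
lemma shortfall_congr {X' : Ω → ℝ} (h : X =ᵐ[P] X') : shortfall P X = shortfall P X' := by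
  funext η
  refine integral_congr_ae ?_
  filter_upwards [h] with ω hω
  rw [hω]

lemma shortfall_nonneg (η : ℝ) : 0 ≤ shortfall P X η :=
  integral_nonneg (fun ω => le_max_right _ _)

include hi in
lemma shortfall_mono : Monotone (shortfall P X) := by
  intro a b hab
  refine integral_mono (integrable_shortfall_P P X hi a) (integrable_shortfall_P P X hi b) ?_
  intro ω
  exact max_le_max (by linarith) le_rfl

include hi in
lemma shortfall_lipschitz (a b : ℝ) : shortfall P X a - shortfall P X b ≤ |a - b| := by
  have h1 : ∀ ω, max (a - X ω) 0 - max (b - X ω) 0 ≤ |a - b| := by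
    intro ω
    rcases le_total (a - X ω) 0 with h | h
    · have := le_max_right (b - X ω) (0:ℝ)
      have h2 : max (a - X ω) 0 = 0 := max_eq_right h
      rw [h2]
      have := abs_nonneg (a - b)
      linarith
    · rw [max_eq_left h]
      rcases le_total (b - X ω) 0 with h' | h'
      · rw [max_eq_right h']
        have : a - b ≤ |a - b| := le_abs_self _
        linarith
      · rw [max_eq_left h']
        have : a - b ≤ |a - b| := le_abs_self _
        linarith
  calc shortfall P X a - shortfall P X b
      = ∫ ω, (max (a - X ω) 0 - max (b - X ω) 0) ∂P := by
        exact (integral_sub (integrable_shortfall_P P X hi a) (integrable_shortfall_P P X hi b)).symm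
    _ ≤ ∫ _, |a - b| ∂P := integral_mono
        ((integrable_shortfall_P P X hi a).sub (integrable_shortfall_P P X hi b))
        (integrable_const _) h1
    _ = |a - b| := by rw [integral_const]; simp

include hi in
lemma shortfall_continuous : Continuous (shortfall P X) := by
  refine Metric.continuous_iff.2 (fun a ε hε => ⟨ε, hε, fun b hab => ?_⟩)
  rw [Real.dist_eq] at *
  rw [abs_sub_lt_iff]
  constructor
  · exact lt_of_le_of_lt (shortfall_lipschitz P X hi b a) hab
  · exact lt_of_le_of_lt (shortfall_lipschitz P X hi a b) (by rwa [abs_sub_comm])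

include hm hi in
lemma shortfall_tendsto_atBot :
    Filter.Tendsto (fun n : ℕ => shortfall P X (-n)) atTop (nhds 0) := by
  have main : Filter.Tendsto (fun n : ℕ => shortfall P X (-n)) atTop (nhds (∫ (_ : Ω), (0:ℝ) ∂P)) := by
    apply tendsto_integral_of_dominated_convergence (fun ω => |X ω|)
    · exact fun n => (((measurable_const.sub hm).max measurable_const).aestronglyMeasurable)
    · exact hi.abs
    · intro n
      refine Filter.Eventually.of_forall (fun ω => ?_)
      rw [Real.norm_eq_abs, abs_of_nonneg (le_max_right _ _)]
      apply max_le ?_ (abs_nonneg _)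
      have h1 := neg_abs_le (X ω)
      have h2 : (0:ℝ) ≤ n := Nat.cast_nonneg n
      linarith
    · refine Filter.Eventually.of_forall (fun ω => ?_)
      obtain ⟨N, hN⟩ := exists_nat_gt (-(X ω))
      apply Filter.Tendsto.congr' (f₁ := fun _ : ℕ => (0:ℝ))
      · filter_upwards [Filter.eventually_ge_atTop N] with n hn
        rw [max_eq_right]
        have : (N:ℝ) ≤ n := by exact_mod_cast hn
        linarith
      · exact tendsto_const_nhds
  simpa using main

include hm hi in
lemma excess_tendsto :
    Filter.Tendsto (fun n : ℕ => ∫ ω, max (X ω - n) 0 ∂P) atTop (nhds 0) := by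
  have main : Filter.Tendsto (fun n : ℕ => ∫ ω, max (X ω - n) 0 ∂P) atTop (nhds (∫ (_ : Ω), (0:ℝ) ∂P)) := by
    apply tendsto_integral_of_dominated_convergence (fun ω => |X ω|)
    · exact fun n => (((hm.sub measurable_const).max measurable_const).aestronglyMeasurable)
    · exact hi.abs
    · intro n
      refine Filter.Eventually.of_forall (fun ω => ?_)
      rw [Real.norm_eq_abs, abs_of_nonneg (le_max_right _ _)]
      apply max_le ?_ (abs_nonneg _)
      have h1 := le_abs_self (X ω)
      have h2 : (0:ℝ) ≤ n := Nat.cast_nonneg n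
      linarith
    · refine Filter.Eventually.of_forall (fun ω => ?_)
      obtain ⟨N, hN⟩ := exists_nat_gt (X ω)
      apply Filter.Tendsto.congr' (f₁ := fun _ : ℕ => (0:ℝ))
      · filter_upwards [Filter.eventually_ge_atTop N] with n hn
        rw [max_eq_right]
        have : (N:ℝ) ≤ n := by exact_mod_cast hn
        linarith
      · exact tendsto_const_nhds
  simpa using main

include hi in
lemma shortfall_decomp (η : ℝ) :
    shortfall P X η = η - (∫ ω, X ω ∂P) + ∫ ω, max (X ω - η) 0 ∂P := by
  have key : ∀ ω, max (η - X ω) 0 = η - X ω + max (X ω - η) 0 := by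
    intro ω
    rcases le_total (η - X ω) 0 with h | h
    · rw [max_eq_right h, max_eq_left (by linarith)]; ring
    · rw [max_eq_left h, max_eq_right (by linarith)]; ring
  rw [shortfall]
  calc ∫ ω, max (η - X ω) 0 ∂P = ∫ ω, (η - X ω + max (X ω - η) 0) ∂P := by
        refine integral_congr_ae (Filter.Eventually.of_forall (fun ω => key ω))
    _ = ∫ ω, (η - X ω) ∂P + ∫ ω, max (X ω - η) 0 ∂P := by
        exact integral_add (f := fun ω => η - X ω) (g := fun ω => max (X ω - η) 0)
          ((integrable_const η).sub hi) (integrable_excess_P P X hi η)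
    _ = η - (∫ ω, X ω ∂P) + ∫ ω, max (X ω - η) 0 ∂P := by
        rw [integral_sub (integrable_const η) hi, integral_const]
        simp

omit [IsProbabilityMeasure P] in
include hm in
lemma cdf_max (c η : ℝ) :
    cdfRV P (fun ω => max (X ω) c) η = if c ≤ η then cdfRV P X η else 0 := by
  rcases le_or_gt c η with h | h
  · rw [if_pos h, cdfRV, cdfRV]
    congr 2
    ext ω
    simp only [Set.mem_setOf_eq, max_le_iff]
    exact ⟨fun h' => h'.1, fun h' => ⟨h', h⟩⟩
  · rw [if_neg (not_le.2 h), cdfRV]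
    have he : {ω | max (X ω) c ≤ η} = ∅ := by
      ext ω
      simp only [Set.mem_setOf_eq, Set.mem_empty_iff_false, iff_false, not_le]
      exact lt_of_lt_of_le h (le_max_right (X ω) c)
    rw [he, measure_empty]; simp

include hm in
lemma qf_max (c : ℝ) {p : ℝ} (hp : p ∈ Set.Ioo (0:ℝ) 1) :
    qf P (fun ω => max (X ω) c) p = max (qf P X p) c := by
  have hset : {η : ℝ | p ≤ cdfRV P (fun ω => max (X ω) c) η} =
      {η : ℝ | p ≤ cdfRV P X η} ∩ Set.Ici c := by
    ext η
    rw [Set.mem_setOf_eq, cdf_max P X hm c η]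
    rcases le_or_gt c η with h | h
    · rw [if_pos h]
      simp only [Set.mem_inter_iff, Set.mem_setOf_eq, Set.mem_Ici]
      exact ⟨fun h' => ⟨h', h⟩, fun h' => h'.1⟩
    · rw [if_neg (not_le.2 h)]
      simp only [Set.mem_inter_iff, Set.mem_setOf_eq, Set.mem_Ici]
      constructor
      · intro h'
        exact absurd (lt_of_lt_of_le hp.1 h') (lt_irrefl _)
      · intro h'; exact absurd h'.2 (not_le.2 h)
  rw [qf, hset]
  have hne : {η : ℝ | p ≤ cdfRV P X η}.Nonempty := nonempty_qset P X hm hp.2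
  have hbb : BddBelow {η : ℝ | p ≤ cdfRV P X η} := bddBelow_qset P X hm hp.1
  obtain ⟨a, ha⟩ := hne
  have hmem : max a c ∈ {η : ℝ | p ≤ cdfRV P X η} ∩ Set.Ici c :=
    ⟨le_trans ha (cdf_mono P X (le_max_left a c)), le_max_right a c⟩
  apply le_antisymm
  · apply csInf_le ⟨c, fun x hx => hx.2⟩
    constructor
    · have h1 : qf P X p ∈ {η : ℝ | p ≤ cdfRV P X η} := qf_mem P X hm hp.1 hp.2
      exact le_trans h1 (cdf_mono P X (le_max_left _ _))
    · exact Set.mem_Ici.2 (le_max_right _ _)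
  · apply le_csInf ⟨max a c, hmem⟩
    rintro x ⟨hx1, hx2⟩
    exact max_le (csInf_le hbb hx1) hx2

include hm hi in
lemma shortfall_max (c η : ℝ) :
    shortfall P (fun ω => max (X ω) c) η = shortfall P X η - shortfall P X (min η c) := by
  have key : ∀ ω, max (η - max (X ω) c) 0 = max (η - X ω) 0 - max (min η c - X ω) 0 := by
    intro ω
    rcases le_total c (X ω) with h | h
    · rw [max_eq_left h]
      have h2 : min η c - X ω ≤ 0 := by
        have := min_le_right η c
        linarith
      rw [max_eq_right h2, sub_zero]
    · rw [max_eq_right h]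
      rcases le_total η c with h' | h'
      · rw [min_eq_left h']
        have h2 : η - c ≤ 0 := by linarith
        rw [max_eq_right h2]
        ring
      · rw [min_eq_right h']
        have h2 : 0 ≤ η - c := by linarith
        have h3 : 0 ≤ c - X ω := by linarith
        rw [max_eq_left h2, max_eq_left (by linarith), max_eq_left h3]
        ring
  rw [shortfall]
  calc ∫ ω, max (η - max (X ω) c) 0 ∂P
      = ∫ ω, (max (η - X ω) 0 - max (min η c - X ω) 0) ∂P :=
        integral_congr_ae (Filter.Eventually.of_forall key)
    _ = shortfall P X η - shortfall P X (min η c) :=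
        integral_sub (integrable_shortfall_P P X hi η) (integrable_shortfall_P P X hi (min η c))

include hi in
lemma integrable_max (c : ℝ) : Integrable (fun ω => max (X ω) c) P := by
  have : (fun ω => max (X ω) c) = fun ω => max (X ω - c) 0 + c := by
    funext ω
    rcases le_total (X ω - c) 0 with h | h
    · rw [max_eq_right h, max_eq_right (by linarith), zero_add]
    · rw [max_eq_left h, max_eq_left (by linarith)]; ring
  rw [this]
  exact (hi.sub (integrable_const c)).pos_part.add (integrable_const c)

lemma max_sub_max_le_abs (a b η : ℝ) : max (η - a) 0 - max (η - b) 0 ≤ |a - b| := by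
  rcases le_total (η - a) 0 with h | h
  · have h1 : max (η - a) 0 = 0 := max_eq_right h
    have h2 := le_max_right (η - b) (0:ℝ)
    have := abs_nonneg (a - b)
    linarith
  · rw [max_eq_left h]
    rcases le_total (η - b) 0 with h' | h'
    · rw [max_eq_right h']
      have : b - a ≤ |a - b| := by rw [abs_sub_comm]; exact le_abs_self _
      linarith
    · rw [max_eq_left h']
      have : b - a ≤ |a - b| := by rw [abs_sub_comm]; exact le_abs_self _
      linarith

variable (W : Ω → ℝ)

include hm hi in
lemma sf_diff_le_W1 (hmW : Measurable W) (hiW : Integrable W P) (η : ℝ) :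
    shortfall P X η - shortfall P W η ≤ ∫ t in Set.Ioo (0:ℝ) 1, |qf P X t - qf P W t| := by
  rw [← integral_sfq P X hm hi η, ← integral_sfq P W hmW hiW η]
  rw [← integral_sub (integrableOn_sfq P X hm hi η) (integrableOn_sfq P W hmW hiW η)]
  refine integral_mono ((integrableOn_sfq P X hm hi η).sub (integrableOn_sfq P W hmW hiW η))
    (((integrableOn_qf P X hm hi).sub (integrableOn_qf P W hmW hiW)).abs) ?_
  intro t
  exact max_sub_max_le_abs _ _ _

include hi in
lemma sf_diff_le_L1 (hiW : Integrable W P) (η : ℝ) :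
    shortfall P X η - shortfall P W η ≤ ∫ ω, |X ω - W ω| ∂P := by
  rw [shortfall, shortfall, ← integral_sub (integrable_shortfall_P P X hi η)
    (integrable_shortfall_P P W hiW η)]
  refine integral_mono ((integrable_shortfall_P P X hi η).sub (integrable_shortfall_P P W hiW η))
    ((hi.sub hiW).abs) ?_
  intro ω
  exact max_sub_max_le_abs _ _ _

include hm hi in
lemma lorenz_diff_le (hmW : Measurable W) (hiW : Integrable W P) {p : ℝ}
    (hp : p ∈ Set.Ioc (0:ℝ) 1) :
    lorenz P W p - lorenz P X p ≤ ∫ t in Set.Ioo (0:ℝ) 1, |qf P W t - qf P X t| := by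
  have hsub : Set.Ioo (0:ℝ) p ⊆ Set.Ioo 0 1 := Set.Ioo_subset_Ioo le_rfl hp.2
  have hqX : IntegrableOn (qf P X) (Set.Ioo (0:ℝ) p) := (integrableOn_qf P X hm hi).mono_set hsub
  have hqW : IntegrableOn (qf P W) (Set.Ioo (0:ℝ) p) := (integrableOn_qf P W hmW hiW).mono_set hsub
  rw [lorenz_eq P W p hp.1.le, lorenz_eq P X p hp.1.le, ← integral_sub hqW hqX]
  calc ∫ t in Set.Ioo (0:ℝ) p, (qf P W t - qf P X t)
      ≤ ∫ t in Set.Ioo (0:ℝ) p, |qf P W t - qf P X t| :=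
        integral_mono (hqW.sub hqX) (hqW.sub hqX).abs (fun t => le_abs_self _)
    _ ≤ ∫ t in Set.Ioo (0:ℝ) 1, |qf P W t - qf P X t| := by
        refine setIntegral_mono_set (((integrableOn_qf P W hmW hiW).sub (integrableOn_qf P X hm hi)).abs)
          (Filter.Eventually.of_forall (fun t => abs_nonneg _)) (HasSubset.Subset.eventuallyLE hsub)

end Stmt14

open Stmt14

/-- for arbitrary integrable `X, Y` on an atomless probability space,
`dist(X,A₂(Y)) = max(0, sup_{p∈(0,1]} (F^{(-2)}_Y(p) - F^{(-2)}_X(p)))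
             = max(0, sup_{η∈ℝ} (F^{(2)}_X(η) - F^{(2)}_Y(η)))`. -/
theorem stmt14 {Ω : Type*} [MeasurableSpace Ω] (P : Measure Ω) [IsProbabilityMeasure P]
    (hP : Atomless P) (X Y : Ω → ℝ) (hX : Integrable X P) (hY : Integrable Y P) :
    distA2 P X Y =
      max 0 (sSup ((fun p => lorenz P Y p - lorenz P X p) '' Set.Ioc (0:ℝ) 1)) ∧
    distA2 P X Y =
      max 0 (sSup (Set.range fun η : ℝ => shortfall P X η - shortfall P Y η)) := by
  classical
  obtain ⟨X', hmX', hXX'⟩ : ∃ X', Measurable X' ∧ X =ᵐ[P] X' :=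
    ⟨hX.1.mk X, hX.1.stronglyMeasurable_mk.measurable, hX.1.ae_eq_mk⟩
  obtain ⟨Y', hmY', hYY'⟩ : ∃ Y', Measurable Y' ∧ Y =ᵐ[P] Y' :=
    ⟨hY.1.mk Y, hY.1.stronglyMeasurable_mk.measurable, hY.1.ae_eq_mk⟩
  have hiX' : Integrable X' P := hX.congr hXX'
  have hiY' : Integrable Y' P := hY.congr hYY'
  have hqX : qf P X = qf P X' := qf_congr P X hXX'
  have hqY : qf P Y = qf P Y' := qf_congr P Y hYY'
  have hlX : lorenz P X = lorenz P X' := lorenz_congr P X hXX'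
  have hlY : lorenz P Y = lorenz P Y' := lorenz_congr P Y hYY'
  have hsX : shortfall P X = shortfall P X' := shortfall_congr P X hXX'
  have hsY : shortfall P Y = shortfall P Y' := shortfall_congr P Y hYY'
  set SB := Set.range (fun η : ℝ => shortfall P X η - shortfall P Y η) with hSBdef
  have hSBne : SB.Nonempty := ⟨_, Set.mem_range_self 0⟩
  have hSBbdd : BddAbove SB := by
    refine ⟨∫ ω, |X' ω - Y' ω| ∂P, ?_⟩
    rintro x ⟨η, rfl⟩
    simp only
    rw [hsX, hsY]
    exact sf_diff_le_L1 P X' hiX' Y' hiY' η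
  set d := sSup SB with hddef
  set A2set := {w : ℝ | ∃ Z : Ω → ℝ, Integrable Z P ∧ SSD P Z Y ∧ w = W1 P X Z} with hA2def
  have hA2 : distA2 P X Y = sInf A2set := rfl
  -- lower bound
  have hlow : ∀ w ∈ A2set, max 0 d ≤ w := by
    rintro w ⟨Z, hiZ, hZY, rfl⟩
    obtain ⟨Z', hmZ', hZZ'⟩ : ∃ Z', Measurable Z' ∧ Z =ᵐ[P] Z' :=
      ⟨hiZ.1.mk Z, hiZ.1.stronglyMeasurable_mk.measurable, hiZ.1.ae_eq_mk⟩
    have hiZ' : Integrable Z' P := hiZ.congr hZZ'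
    have hqZ : qf P Z = qf P Z' := qf_congr P Z hZZ'
    have hsZ : shortfall P Z = shortfall P Z' := shortfall_congr P Z hZZ'
    have hW1 : W1 P X Z = ∫ t in Set.Ioo (0:ℝ) 1, |qf P X' t - qf P Z' t| := by
      rw [W1, intervalIntegral.integral_of_le zero_le_one, hqX, hqZ]
      exact setIntegral_congr_set (Ioo_ae_eq_Ioc (μ := (volume : Measure ℝ))).symm
    have hnn : 0 ≤ W1 P X Z := by
      rw [hW1]
      exact integral_nonneg (fun t => abs_nonneg _)
    have hdle : d ≤ W1 P X Z := by
      apply csSup_le hSBne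
      rintro x ⟨η, rfl⟩
      simp only
      have h1 : shortfall P Z η ≤ shortfall P Y η := hZY η
      have h2 : shortfall P X η - shortfall P Z η ≤ ∫ t in Set.Ioo (0:ℝ) 1, |qf P X' t - qf P Z' t| := by
        rw [hsX, hsZ]
        exact sf_diff_le_W1 P X' hmX' hiX' Z' hmZ' hiZ' η
      rw [hW1]
      linarith
    exact max_le hnn hdle
  -- main identity : distA2 = max 0 d
  have hmain : distA2 P X Y = max 0 d := by
    rcases le_or_gt d 0 with hd0 | hd0
    · have hmax : max 0 d = 0 := max_eq_left hd0
      have hSSD : SSD P X Y := by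
        intro η
        have h1 : shortfall P X η - shortfall P Y η ≤ d := le_csSup hSBbdd (Set.mem_range_self η)
        linarith
      have h0mem : (0:ℝ) ∈ A2set := by
        refine ⟨X, hX, hSSD, ?_⟩
        rw [W1]
        simp
      rw [hA2, hmax]
      apply le_antisymm
      · exact csInf_le ⟨0, fun w hw => le_trans (le_max_left 0 d) (hlow w hw)⟩ h0mem
      · exact le_csInf ⟨0, h0mem⟩ (fun w hw => le_trans (le_max_left 0 d) (hlow w hw))
    · have hmax : max 0 d = d := max_eq_right hd0.le
      -- find c with shortfall P X' c = d
      obtain ⟨n₀, hn₀⟩ := ((shortfall_tendsto_atBot P X' hmX' hiX').eventually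
        (eventually_lt_nhds hd0)).exists
      set b := max (d + ∫ ω, X' ω ∂P) (-(n₀:ℝ)) with hbdef
      have hSb : d ≤ shortfall P X' b := by
        have h1 : b - ∫ ω, X' ω ∂P ≤ shortfall P X' b := by
          have h2 : ∫ ω, (b - X' ω) ∂P ≤ shortfall P X' b := by
            refine integral_mono ((integrable_const b).sub hiX')
              (integrable_shortfall_P P X' hiX' b) (fun ω => le_max_left _ _)
          rw [integral_sub (integrable_const b) hiX', integral_const] at h2
          simpa using h2
        have h3 : d + ∫ ω, X' ω ∂P ≤ b := le_max_left _ _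
        linarith
      obtain ⟨c, _, hc⟩ := intermediate_value_Icc (le_max_right _ _ : -(n₀:ℝ) ≤ b)
        ((shortfall_continuous P X' hiX').continuousOn) (Set.mem_Icc.2 ⟨hn₀.le, hSb⟩)
      set Z := fun ω => max (X' ω) c with hZdef
      have hiZ : Integrable Z P := integrable_max P X' hiX' c
      have hSSD : SSD P Z Y := by
        intro η
        rw [show shortfall P Z η = shortfall P X' η - shortfall P X' (min η c) from
          shortfall_max P X' hmX' hiX' c η]
        rcases le_total η c with h | h
        · rw [min_eq_left h, sub_self]
          exact shortfall_nonneg P Y η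
        · rw [min_eq_right h, hc]
          have h1 : shortfall P X η - shortfall P Y η ≤ d := le_csSup hSBbdd (Set.mem_range_self η)
          rw [hsX, hsY] at h1
          rw [hsY]
          linarith
      have hW1Z : W1 P X Z = d := by
        rw [W1, intervalIntegral.integral_of_le zero_le_one, hqX]
        rw [setIntegral_congr_set (Ioo_ae_eq_Ioc (μ := (volume : Measure ℝ))).symm]
        rw [setIntegral_congr_fun measurableSet_Ioo
          (g := fun t => max (c - qf P X' t) 0) ?_]
        · exact (integral_sfq P X' hmX' hiX' c).trans hc
        · intro t ht
          simp only
          rw [show qf P Z t = max (qf P X' t) c from qf_max P X' hmX' c ht]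
          rcases le_total (qf P X' t) c with h | h
          · rw [max_eq_right h, abs_of_nonpos (by simp [h]), max_eq_left (by linarith)]
            ring
          · rw [max_eq_left h, sub_self, abs_zero, max_eq_right (by linarith)]
      have hdmem : d ∈ A2set := ⟨Z, hiZ, hSSD, hW1Z.symm⟩
      rw [hA2, hmax]
      apply le_antisymm
      · exact csInf_le ⟨0, fun w hw => le_trans (le_max_left 0 d) (hlow w hw)⟩ hdmem
      · exact le_csInf ⟨d, hdmem⟩ (fun w hw => le_trans (le_max_right 0 d) (hlow w hw))
  -- the Lorenz supremum agrees
  set LD := ((fun p => lorenz P Y p - lorenz P X p) '' Set.Ioc (0:ℝ) 1) with hLDdef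
  have hLDne : LD.Nonempty := ⟨_, ⟨1, ⟨zero_lt_one, le_rfl⟩, rfl⟩⟩
  have hLDbdd : BddAbove LD := by
    refine ⟨∫ t in Set.Ioo (0:ℝ) 1, |qf P Y' t - qf P X' t|, ?_⟩
    rintro y ⟨p, hp, rfl⟩
    simp only
    rw [hlX, hlY]
    exact lorenz_diff_le P X' hmX' hiX' Y' hmY' hiY' hp
  have hLD_le : ∀ y ∈ LD, y ≤ max 0 d := by
    rintro y ⟨p, hp, rfl⟩
    simp only
    rcases lt_or_eq_of_le hp.2 with hp1 | hp1
    · -- p < 1 : use the attained Lorenz conjugacy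
      set η := qf P Y' p with hηdef
      have hLa : lorenz P Y' p = p * η - shortfall P Y' η :=
        lorenz_attained P Y' hmY' hiY' ⟨hp.1, hp1⟩
      have hyoung : p * η - lorenz P X' p ≤ shortfall P X' η :=
        young P X' hmX' hiX' ⟨hp.1, hp.2⟩ η
      have hsd : shortfall P X' η - shortfall P Y' η ≤ d := by
        have := le_csSup hSBbdd (Set.mem_range_self (f := fun η : ℝ =>
          shortfall P X η - shortfall P Y η) η)
        rw [hsX, hsY] at this
        exact this
      rw [hlX, hlY, hLa]
      have := le_max_right (0:ℝ) d
      linarith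
    · -- p = 1 : limit argument
      subst hp1
      have hL1Y : lorenz P Y 1 = ∫ ω, Y' ω ∂P := by
        rw [hlY, lorenz_eq P Y' 1 zero_le_one]
        exact integral_qf P Y' hmY' hiY'
      have hL1X : lorenz P X 1 = ∫ ω, X' ω ∂P := by
        rw [hlX, lorenz_eq P X' 1 zero_le_one]
        exact integral_qf P X' hmX' hiX'
      rw [hL1Y, hL1X]
      have hstep : ∀ n : ℕ, (∫ ω, Y' ω ∂P) - ∫ ω, X' ω ∂P ≤ max 0 d + ∫ ω, max (Y' ω - n) 0 ∂P := by
        intro n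
        have h1 : (n:ℝ) - (∫ ω, X' ω ∂P) ≤ shortfall P X' n := by
          have h2 : ∫ ω, ((n:ℝ) - X' ω) ∂P ≤ shortfall P X' n :=
            integral_mono ((integrable_const _).sub hiX')
              (integrable_shortfall_P P X' hiX' _) (fun ω => le_max_left _ _)
          rw [integral_sub (integrable_const _) hiX', integral_const] at h2
          simpa using h2
        have h3 : shortfall P Y' n = (n:ℝ) - (∫ ω, Y' ω ∂P) + ∫ ω, max (Y' ω - n) 0 ∂P :=
          shortfall_decomp P Y' hiY' n
        have h4 : shortfall P X' n - shortfall P Y' n ≤ d := by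
          have := le_csSup hSBbdd (Set.mem_range_self (f := fun η : ℝ =>
            shortfall P X η - shortfall P Y η) (n : ℝ))
          rw [hsX, hsY] at this
          exact this
        have h5 : d ≤ max 0 d := le_max_right _ _
        linarith
      have htend : Filter.Tendsto (fun n : ℕ => max 0 d + ∫ ω, max (Y' ω - n) 0 ∂P) atTop
          (nhds (max 0 d)) := by
        have := (excess_tendsto P Y' hmY' hiY').const_add (max 0 d)
        simpa using this
      exact ge_of_tendsto' htend hstep
  have hd_le : ∀ x ∈ SB, x ≤ max 0 (sSup LD) := by
    rintro x ⟨η, rfl⟩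
    simp only
    set ph := (P {ω | X' ω < η}).toReal with hphdef
    have hA := shortfall_attained P X' hmX' hiX' η
    rw [← hphdef] at hA
    have hph0 : 0 ≤ ph := ENNReal.toReal_nonneg
    rcases eq_or_lt_of_le hph0 with h0 | h0
    · have hsf0 : shortfall P X' η = 0 := by
        rw [hA, ← h0]
        simp [lorenz]
      rw [hsX, hsY, hsf0]
      have h1 := shortfall_nonneg P Y' η
      have h2 := le_max_left (0:ℝ) (sSup LD)
      linarith
    · have hph1 : ph ≤ 1 := by
        rw [hphdef]
        have := prob_le_one (μ := P) (s := {ω | X' ω < η})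
        exact ((ENNReal.toReal_le_toReal (measure_ne_top _ _) ENNReal.one_ne_top).2 this).trans
          (by simp)
      have hyoungY : ph * η - lorenz P Y' ph ≤ shortfall P Y' η :=
        young P Y' hmY' hiY' ⟨h0, hph1⟩ η
      have hmem : lorenz P Y ph - lorenz P X ph ∈ LD := ⟨ph, ⟨h0, hph1⟩, rfl⟩
      have hle := le_csSup hLDbdd hmem
      rw [hlX, hlY] at hle
      rw [hsX, hsY, hA]
      have h2 := le_max_right (0:ℝ) (sSup LD)
      linarith
  have hfinal : max 0 (sSup LD) = max 0 d := by
    apply le_antisymm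
    · exact max_le (le_max_left 0 d) (csSup_le hLDne hLD_le)
    · exact max_le (le_max_left 0 (sSup LD)) (csSup_le hSBne hd_le)
  exact ⟨hmain.trans hfinal.symm, hmain⟩

end
end

section
/- Let X, Y be integrable real random variables, h(p) = F⁻¹_Y(p) − F⁻¹_X(p) for p ∈ (0,1), l(p) = F^{(−2)}_Y(p) − F^{(−2)}_X(p) for p ∈ [0,1], and A = {p ∈ (0,1] : l(q) < l(p) for all q < p}. Suppose p ↦ sign(h(p)) has at most finitely many discontinuity points on (0,1). Then for every p ∈ [0,1], ∫_{A ∩ (0,p]} h(t) dt = sup_{q ∈ [0,p]} l(q); in particular ∫_{A ∩ (0,1]} h(t) dt = sup_{q ∈ [0,1]} l(q). -/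
open MeasureTheory Filter Set

noncomputable section

open Topology
open scoped ENNReal NNReal

section QF

variable {Ω : Type*} [MeasurableSpace Ω] (P : Measure Ω) [IsProbabilityMeasure P]

lemma qf_integrableOn_meas (Z : Ω → ℝ) (hZm : Measurable Z) (hZ : Integrable Z P) :
    IntegrableOn (qf P Z) (Ioo 0 1) volume := by
  set F := cdfRV P Z with hF
  have hFmono : Monotone F := by
    intro a b hab
    exact ENNReal.toReal_mono (measure_ne_top P _)
      (measure_mono (fun ω (hω : Z ω ≤ a) => hω.trans hab))
  have hF01 : ∀ η, 0 ≤ F η ∧ F η ≤ 1 := by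
    intro η
    refine ⟨ENNReal.toReal_nonneg, ?_⟩
    have h1 : P {ω | Z ω ≤ η} ≤ 1 := prob_le_one
    simpa [hF, cdfRV] using ENNReal.toReal_mono (by simp) h1
  -- right continuity along the sequence η + 1/(n+1)
  have hrc : ∀ η : ℝ, Tendsto (fun n : ℕ => F (η + 1 / (n + 1))) atTop (𝓝 (F η)) := by
    intro η
    have hinter : ⋂ n : ℕ, {ω | Z ω ≤ η + 1 / (n + 1)} = {ω | Z ω ≤ η} := by
      ext ω
      simp only [mem_iInter, mem_setOf_eq]
      constructor
      · intro hall
        by_contra hlt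
        push_neg at hlt
        obtain ⟨n, hn⟩ := exists_nat_one_div_lt (sub_pos.2 hlt)
        have := hall n
        linarith
      · intro hle n
        have : (0:ℝ) < 1 / (n + 1) := by positivity
        linarith
    have hmeas : ∀ n : ℕ, NullMeasurableSet {ω | Z ω ≤ η + 1 / (n + 1)} P :=
      fun n => (hZm measurableSet_Iic).nullMeasurableSet
    have hanti : Antitone (fun n : ℕ => {ω | Z ω ≤ η + 1 / (n + 1)}) := by
      intro m n hmn ω (hω : Z ω ≤ _)
      refine hω.trans (add_le_add_right (one_div_le_one_div_of_le (by positivity : (0:ℝ) < m + 1) ?_) η)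
      have : (m:ℝ) ≤ n := by exact_mod_cast hmn
      linarith
    have := tendsto_measure_iInter_atTop hmeas hanti ⟨0, measure_ne_top _ _⟩
    rw [hinter] at this
    exact (ENNReal.tendsto_toReal (measure_ne_top _ _)).comp this
  have hrc' : ∀ η t : ℝ, (∀ n : ℕ, t ≤ F (η + 1 / (n + 1))) → t ≤ F η := by
    intro η t hall
    exact ge_of_tendsto' (hrc η) hall
  -- F tends to 0 at -infty: for every t > 0 there is η with F η < t
  have hbot : ∀ t : ℝ, 0 < t → ∃ η : ℝ, F η < t := by
    intro t ht
    have hinter : ⋂ n : ℕ, {ω | Z ω ≤ -(n:ℝ)} = (∅ : Set Ω) := by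
      ext ω
      simp only [mem_iInter, mem_setOf_eq, mem_empty_iff_false, iff_false, not_forall]
      obtain ⟨n, hn⟩ := exists_nat_gt (-(Z ω))
      exact ⟨n, by push_neg; linarith⟩
    have hmeas : ∀ n : ℕ, NullMeasurableSet {ω | Z ω ≤ -(n:ℝ)} P :=
      fun n => (hZm measurableSet_Iic).nullMeasurableSet
    have hanti : Antitone (fun n : ℕ => {ω | Z ω ≤ -(n:ℝ)}) := by
      intro m n hmn ω (hω : Z ω ≤ _)
      refine hω.trans (neg_le_neg ?_)
      exact_mod_cast hmn
    have htend := tendsto_measure_iInter_atTop hmeas hanti ⟨0, measure_ne_top _ _⟩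
    rw [hinter] at htend
    simp only [measure_empty] at htend
    have htend' : Tendsto (fun n : ℕ => F (-(n:ℝ))) atTop (𝓝 0) := by
      have := (ENNReal.tendsto_toReal (by simp : (0:ℝ≥0∞) ≠ ⊤)).comp htend
      simpa [cdfRV, hF, Function.comp_def] using this
    obtain ⟨n, hn⟩ := (htend'.eventually_lt_const ht).exists
    exact ⟨-(n:ℝ), hn⟩
  -- F tends to 1 at +infty: for every t < 1 there is η with t ≤ F η
  have htop : ∀ t : ℝ, t < 1 → ∃ η : ℝ, t ≤ F η := by
    intro t ht
    have hunion : ⋃ n : ℕ, {ω | Z ω ≤ (n:ℝ)} = (univ : Set Ω) := by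
      ext ω
      simp only [mem_iUnion, mem_setOf_eq, mem_univ, iff_true]
      obtain ⟨n, hn⟩ := exists_nat_gt (Z ω)
      exact ⟨n, hn.le⟩
    have hmono2 : Monotone (fun n : ℕ => {ω | Z ω ≤ (n:ℝ)}) := by
      intro m n hmn ω (hω : Z ω ≤ _)
      exact hω.trans (by exact_mod_cast hmn)
    have htend := tendsto_measure_iUnion_atTop (μ := P) hmono2
    rw [hunion] at htend
    have htend' : Tendsto (fun n : ℕ => F (n:ℝ)) atTop (𝓝 1) := by
      have := (ENNReal.tendsto_toReal (by simp : (1:ℝ≥0∞) ≠ ⊤)).comp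
        (by simpa [measure_univ] using htend)
      simpa [cdfRV, hF, Function.comp_def] using this
    obtain ⟨n, hn⟩ := (htend'.eventually_const_lt ht).exists
    exact ⟨(n:ℝ), hn.le⟩
  -- the key Galois property of the quantile
  have hnonK : ∀ t : ℝ, t < 1 → {η : ℝ | t ≤ F η}.Nonempty := fun t ht => htop t ht
  have hbddK : ∀ t : ℝ, 0 < t → BddBelow {η : ℝ | t ≤ F η} := by
    intro t ht
    obtain ⟨η₀, hη₀⟩ := hbot t ht
    refine ⟨η₀, fun η hη => ?_⟩
    by_contra hlt
    push_neg at hlt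
    exact absurd (hη.trans (hFmono hlt.le)) (not_le.2 hη₀)
  have hkey : ∀ t ∈ Ioo (0:ℝ) 1, ∀ η : ℝ, qf P Z t ≤ η ↔ t ≤ F η := by
    intro t ht η
    constructor
    · intro hle
      refine hrc' η t fun n => ?_
      have hlt : sInf {η' : ℝ | t ≤ F η'} < η + 1 / (n + 1) :=
        lt_of_le_of_lt hle (lt_add_of_pos_right η (by positivity))
      obtain ⟨η', hη', hη'lt⟩ := exists_lt_of_csInf_lt (hnonK t ht.2) hlt
      exact hη'.trans (hFmono hη'lt.le)
    · intro hle
      exact csInf_le (hbddK t ht.1) hle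
  have hqmono : MonotoneOn (qf P Z) (Ioo 0 1) := by
    intro a ha b hb hab
    exact csInf_le_csInf (hbddK a ha.1) (hnonK b hb.2)
      (fun η (hη : b ≤ F η) => le_trans hab hη)
  have hqmeas : AEMeasurable (qf P Z) (volume.restrict (Ioo (0:ℝ) 1)) :=
    aemeasurable_restrict_of_monotoneOn measurableSet_Ioo hqmono
  haveI : IsProbabilityMeasure (volume.restrict (Ioo (0:ℝ) 1)) :=
    ⟨by simp [Measure.restrict_apply]⟩
  have hmap : Measure.map (qf P Z) (volume.restrict (Ioo (0:ℝ) 1)) = Measure.map Z P := by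
    haveI : IsProbabilityMeasure (Measure.map (qf P Z) (volume.restrict (Ioo (0:ℝ) 1))) :=
      Measure.isProbabilityMeasure_map hqmeas
    refine Measure.ext_of_Iic _ _ (fun η => ?_)
    rw [Measure.map_apply_of_aemeasurable hqmeas measurableSet_Iic,
      Measure.map_apply hZm measurableSet_Iic,
      Measure.restrict_apply' measurableSet_Ioo]
    have hset : qf P Z ⁻¹' Iic η ∩ Ioo 0 1 = Iic (F η) ∩ Ioo 0 1 := by
      ext t
      simp only [mem_inter_iff, mem_preimage, mem_Iic, and_congr_left_iff]
      intro htm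
      exact hkey t htm η
    rw [hset]
    have hPZ : P (Z ⁻¹' Iic η) = ENNReal.ofReal (F η) := by
      rw [hF]
      unfold cdfRV
      rw [ENNReal.ofReal_toReal (measure_ne_top _ _)]
      rfl
    rw [hPZ]
    rcases le_or_gt 1 (F η) with h1 | h1
    · have hFη : F η = 1 := le_antisymm (hF01 η).2 h1
      have : Iic (F η) ∩ Ioo (0:ℝ) 1 = Ioo 0 1 := by
        apply inter_eq_self_of_subset_right
        intro x hx
        rw [hFη]
        exact (mem_Iic).2 hx.2.le
      rw [this, hFη]
      simp
    · have : Iic (F η) ∩ Ioo (0:ℝ) 1 = Ioc 0 (F η) := by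
        ext x
        simp only [mem_inter_iff, mem_Iic, mem_Ioo, mem_Ioc]
        constructor
        · rintro ⟨hx, hx0, _⟩; exact ⟨hx0, hx⟩
        · rintro ⟨hx0, hx⟩; exact ⟨hx, hx0, lt_of_le_of_lt hx h1⟩
      rw [this, Real.volume_Ioc, sub_zero]
  have hZint' : Integrable (fun x : ℝ => x) (Measure.map Z P) :=
    (integrable_map_measure aestronglyMeasurable_id hZm.aemeasurable).2 hZ
  rw [← hmap] at hZint'
  exact (integrable_map_measure aestronglyMeasurable_id hqmeas).1 hZint'

lemma qf_integrableOn (Z : Ω → ℝ) (hZ : Integrable Z P) :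
    IntegrableOn (qf P Z) (Ioo 0 1) volume := by
  obtain ⟨Z', hZ'm, hZ'eq⟩ : ∃ Z' : Ω → ℝ, Measurable Z' ∧ Z =ᵐ[P] Z' :=
    ⟨hZ.1.mk Z, hZ.1.measurable_mk, hZ.1.ae_eq_mk⟩
  have hcdf : cdfRV P Z = cdfRV P Z' := by
    funext η
    unfold cdfRV
    congr 1
    apply measure_congr
    filter_upwards [hZ'eq] with ω hω
    show (Z ω ≤ η) = (Z' ω ≤ η)
    rw [hω]
  have hqf : qf P Z = qf P Z' := by
    funext t
    unfold qf
    rw [hcdf]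
  rw [hqf]
  exact qf_integrableOn_meas P Z' hZ'm (hZ.congr hZ'eq)

end QF

section Det

lemma step_lemma (h l : ℝ → ℝ)
    (hint : IntegrableOn h (Ioc 0 1) volume)
    (hcont : ContinuousOn l (Icc 0 1))
    (hincr : ∀ x y : ℝ, 0 ≤ x → x ≤ y → y ≤ 1 → l y - l x = ∫ t in Ioc x y, h t)
    (A : Set ℝ)
    (hA : A = {p : ℝ | p ∈ Ioc (0:ℝ) 1 ∧ ∀ q ∈ Ico (0:ℝ) p, l q < l p})
    (b c : ℝ) (hb : 0 ≤ b) (hbc : b < c) (hc : c ≤ 1)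
    (hsgn : (∀ t ∈ Ioo b c, 0 < h t) ∨ (∀ t ∈ Ioo b c, h t ≤ 0))
    (IH : MeasurableSet (A ∩ Ioc 0 b) ∧ (∫ t in A ∩ Ioc 0 b, h t) = sSup (l '' Icc 0 b)) :
    MeasurableSet (A ∩ Ioc 0 c) ∧ (∫ t in A ∩ Ioc 0 c, h t) = sSup (l '' Icc 0 c) := by
  have hbc1 : b ≤ 1 := hbc.le.trans hc
  have hc0 : 0 ≤ c := hb.trans hbc.le
  -- the maximum of l on [0,b] is attained
  obtain ⟨q₀, hq₀mem, hq₀max⟩ : ∃ q₀ ∈ Icc (0:ℝ) b, ∀ q ∈ Icc (0:ℝ) b, l q ≤ l q₀ := by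
    obtain ⟨q₀, hmem, hmax⟩ := isCompact_Icc.exists_isMaxOn (nonempty_Icc.2 hb)
      (hcont.mono (Icc_subset_Icc le_rfl hbc1))
    exact ⟨q₀, hmem, fun q hq => hmax hq⟩
  have hMb : sSup (l '' Icc 0 b) = l q₀ :=
    IsGreatest.csSup_eq ⟨⟨q₀, hq₀mem, rfl⟩, fun x ⟨q, hq, hxq⟩ => hxq ▸ hq₀max q hq⟩
  -- increments over subintervals of [b,c] expressed with Ioo
  have hincr' : ∀ x y : ℝ, b ≤ x → x ≤ y → y ≤ c → l y - l x = ∫ t in Ioo x y, h t := by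
    intro x y hx hxy hyc
    rw [hincr x y (hb.trans hx) hxy (hyc.trans hc)]
    exact (setIntegral_congr_set Ioo_ae_eq_Ioc).symm
  have hsplit : A ∩ Ioc 0 c = (A ∩ Ioc 0 b) ∪ (A ∩ Ioc b c) := by
    rw [← inter_union_distrib_left, Ioc_union_Ioc_eq_Ioc hb hbc.le]
  rcases hsgn with hpos | hneg
  · -- h strictly positive on (b, c)
    have hlstrict : ∀ x y : ℝ, b ≤ x → x < y → y ≤ c → l x < l y := by
      intro x y hx hxy hyc
      have hkey : (0:ℝ) < ∫ t in Ioo x y, h t := by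
        have hi : IntegrableOn h (Ioo x y) volume :=
          hint.mono_set (fun t ht => ⟨lt_of_le_of_lt (hb.trans hx) ht.1, ht.2.le.trans (hyc.trans hc)⟩)
        rw [setIntegral_pos_iff_support_of_nonneg_ae ?hnn hi]
        case hnn =>
          filter_upwards [ae_restrict_mem measurableSet_Ioo] with t ht
          exact (hpos t ⟨lt_of_le_of_lt hx ht.1, lt_of_lt_of_le ht.2 hyc⟩).le
        have hsub : Ioo x y ⊆ Function.support h ∩ Ioo x y := fun t ht =>
          ⟨ne_of_gt (hpos t ⟨lt_of_le_of_lt hx ht.1, lt_of_lt_of_le ht.2 hyc⟩), ht⟩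
        calc (0:ℝ≥0∞) < ENNReal.ofReal (y - x) := by
              simp [ENNReal.ofReal_pos, sub_pos.2 hxy]
          _ = volume (Ioo x y) := (Real.volume_Ioo).symm
          _ ≤ volume (Function.support h ∩ Ioo x y) := measure_mono hsub
      have := hincr' x y hx hxy.le hyc
      linarith
    have hlmono : ∀ x y : ℝ, b ≤ x → x ≤ y → y ≤ c → l x ≤ l y := by
      intro x y hx hxy hyc
      rcases eq_or_lt_of_le hxy with rfl | hlt
      · exact le_rfl
      · exact (hlstrict x y hx hlt hyc).le
    rcases le_or_gt (l c) (l q₀) with hcase | hcase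
    · -- running max not exceeded: A ∩ (b,c] = ∅
      have hempty : A ∩ Ioc b c = ∅ := by
        ext q
        simp only [mem_inter_iff, mem_empty_iff_false, iff_false, not_and]
        intro hqA hq
        rw [hA] at hqA
        have hlt := hqA.2 q₀ ⟨hq₀mem.1, lt_of_le_of_lt hq₀mem.2 hq.1⟩
        have : l q ≤ l c := hlmono q c hq.1.le hq.2 le_rfl
        linarith
      have hAc : A ∩ Ioc 0 c = A ∩ Ioc 0 b := by rw [hsplit, hempty, union_empty]
      have hMc : sSup (l '' Icc 0 c) = l q₀ := by
        refine IsGreatest.csSup_eq ⟨⟨q₀, ⟨hq₀mem.1, hq₀mem.2.trans hbc.le⟩, rfl⟩, ?_⟩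
        rintro x ⟨q, hq, rfl⟩
        rcases le_or_gt q b with hqb | hqb
        · exact hq₀max q ⟨hq.1, hqb⟩
        · exact (hlmono q c hqb.le hq.2 le_rfl).trans hcase
      rw [hAc, hMc, ← hMb]
      exact IH
    · -- running max exceeded: A ∩ (b,c] = (s, c]
      set K := Icc b c ∩ l ⁻¹' Iic (l q₀) with hK
      have hKb : b ∈ K := ⟨⟨le_rfl, hbc.le⟩, hq₀max b ⟨hb, le_rfl⟩⟩
      have hKne : K.Nonempty := ⟨b, hKb⟩
      have hKbdd : BddAbove K := ⟨c, fun x hx => hx.1.2⟩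
      have hKclosed : IsClosed K :=
        ContinuousOn.preimage_isClosed_of_isClosed
          (hcont.mono (Icc_subset_Icc hb hc)) isClosed_Icc isClosed_Iic
      set s := sSup K with hs
      have hsK : s ∈ K := hKclosed.csSup_mem hKne hKbdd
      have hbs : b ≤ s := le_csSup hKbdd hKb
      have hsc : s ≤ c := hsK.1.2
      have hls : l s ≤ l q₀ := hsK.2
      have hsc' : s < c := lt_of_le_of_ne hsc (fun he => by rw [he] at hls; linarith)
      have hup : ∀ q ∈ Ioc s c, l q₀ < l q := by
        intro q hq
        by_contra hle
        push_neg at hle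
        have : q ∈ K := ⟨⟨hbs.trans hq.1.le, hq.2⟩, hle⟩
        exact absurd (le_csSup hKbdd this) (not_le.2 hq.1)
      have hlsEq : l s = l q₀ := by
        rcases eq_or_lt_of_le hls with he | hlt
        · exact he
        · exfalso
          obtain ⟨q, hq, hlq⟩ := intermediate_value_Icc hsc'.le
            (hcont.mono (Icc_subset_Icc (hb.trans hbs) hc)) ⟨hlt.le, hcase.le⟩
          rcases eq_or_lt_of_le hq.1 with rfl | hq1
          · rw [hlq] at hlt; exact lt_irrefl _ hlt
          · exact absurd hlq (ne_of_gt (hup q ⟨hq1, hq.2⟩))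
      have hAbc : A ∩ Ioc b c = Ioc s c := by
        ext q
        simp only [mem_inter_iff, mem_Ioc]
        constructor
        · rintro ⟨hqA, hq⟩
          rw [hA] at hqA
          refine ⟨?_, hq.2⟩
          by_contra hqs
          push_neg at hqs
          have h1 : l q ≤ l s := hlmono q s hq.1.le hqs hsc
          have h2 := hqA.2 q₀ ⟨hq₀mem.1, lt_of_le_of_lt hq₀mem.2 hq.1⟩
          rw [hlsEq] at h1
          linarith
        · rintro ⟨hsq, hqc⟩
          have hbq : b < q := lt_of_le_of_lt hbs hsq
          refine ⟨?_, hbq, hqc⟩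
          rw [hA]
          refine ⟨⟨hb.trans_lt hbq, hqc.trans hc⟩, ?_⟩
          intro q' hq'
          rcases le_or_gt q' b with hq'b | hq'b
          · exact lt_of_le_of_lt (hq₀max q' ⟨hq'.1, hq'b⟩) (hup q ⟨hsq, hqc⟩)
          · exact hlstrict q' q hq'b.le hq'.2 hqc
      have hAc : A ∩ Ioc 0 c = (A ∩ Ioc 0 b) ∪ Ioc s c := by rw [hsplit, hAbc]
      constructor
      · rw [hAc]; exact IH.1.union measurableSet_Ioc
      · have hdisj : Disjoint (A ∩ Ioc 0 b) (Ioc s c) := by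
          rw [disjoint_left]
          rintro t ⟨_, ht⟩ ht'
          exact absurd (ht.2.trans hbs) (not_le.2 ht'.1)
        have hint1 : IntegrableOn h (A ∩ Ioc 0 b) volume := by
          refine hint.mono_set ?_
          rw [hA]
          rintro t ⟨ht, _⟩
          exact ht.1
        have hint2 : IntegrableOn h (Ioc s c) volume :=
          hint.mono_set (Ioc_subset_Ioc (hb.trans hbs) hc)
        rw [hAc, setIntegral_union hdisj measurableSet_Ioc hint1 hint2, IH.2, hMb]
        have hlc : l c - l s = ∫ t in Ioc s c, h t := hincr s c (hb.trans hbs) hsc hc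
        have hMc : sSup (l '' Icc 0 c) = l c := by
          refine IsGreatest.csSup_eq ⟨⟨c, ⟨hc0, le_rfl⟩, rfl⟩, ?_⟩
          rintro x ⟨q, hq, rfl⟩
          rcases le_or_gt q b with hqb | hqb
          · exact (hq₀max q ⟨hq.1, hqb⟩).trans hcase.le
          · exact hlmono q c hqb.le hq.2 le_rfl
        rw [hMc]
        rw [hlsEq] at hlc
        linarith
  · -- h nonpositive on (b, c): l nonincreasing there, A ∩ (b,c] = ∅
    have hlanti : ∀ x y : ℝ, b ≤ x → x ≤ y → y ≤ c → l y ≤ l x := by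
      intro x y hx hxy hyc
      have hkey : (∫ t in Ioo x y, h t) ≤ 0 := by
        have : ∀ᵐ t ∂(volume.restrict (Ioo x y)), h t ≤ 0 := by
          filter_upwards [ae_restrict_mem measurableSet_Ioo] with t ht
          exact hneg t ⟨lt_of_le_of_lt hx ht.1, lt_of_lt_of_le ht.2 hyc⟩
        exact integral_nonpos_of_ae this
      have := hincr' x y hx hxy hyc
      linarith
    have hempty : A ∩ Ioc b c = ∅ := by
      ext q
      simp only [mem_inter_iff, mem_empty_iff_false, iff_false, not_and]
      intro hqA hq
      rw [hA] at hqA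
      have hmid : (b + q) / 2 ∈ Ico (0:ℝ) q := by
        constructor
        · have := hq.1; linarith
        · have := hq.1; linarith
      have h1 := hqA.2 _ hmid
      have h2 : l q ≤ l ((b + q) / 2) := by
        refine hlanti _ q ?_ ?_ hq.2
        · have := hq.1; linarith
        · have := hq.1; linarith
      linarith
    have hAc : A ∩ Ioc 0 c = A ∩ Ioc 0 b := by rw [hsplit, hempty, union_empty]
    have hMc : sSup (l '' Icc 0 c) = l q₀ := by
      refine IsGreatest.csSup_eq ⟨⟨q₀, ⟨hq₀mem.1, hq₀mem.2.trans hbc.le⟩, rfl⟩, ?_⟩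
      rintro x ⟨q, hq, rfl⟩
      rcases le_or_gt q b with hqb | hqb
      · exact hq₀max q ⟨hq.1, hqb⟩
      · exact (hlanti b q le_rfl hqb.le hq.2).trans (hq₀max b ⟨hb, le_rfl⟩)
    rw [hAc, hMc, ← hMb]
    exact IH

end Det

section Det2

lemma sign_const (g : ℝ → ℝ) (b c : ℝ)
    (hcont : ∀ t ∈ Ioo b c, ContinuousAt (fun q => Real.sign (g q)) t) :
    (∀ t ∈ Ioo b c, 0 < g t) ∨ (∀ t ∈ Ioo b c, g t ≤ 0) := by
  by_cases hex : ∃ t₀ ∈ Ioo b c, 0 < g t₀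
  · left
    obtain ⟨t₀, ht₀, hgt₀⟩ := hex
    intro t₁ ht₁
    by_contra hle
    push_neg at hle
    have h0 : Real.sign (g t₀) = 1 := Real.sign_of_pos hgt₀
    have h1 : Real.sign (g t₁) ≤ 0 := by
      rcases eq_or_lt_of_le hle with he | hlt
      · rw [he, Real.sign_zero]
      · rw [Real.sign_of_neg hlt]; norm_num
    have hsub : uIcc t₀ t₁ ⊆ Ioo b c := (ordConnected_Ioo).uIcc_subset ht₀ ht₁
    have hconts : ContinuousOn (fun q => Real.sign (g q)) (uIcc t₀ t₁) :=
      fun t ht => (hcont t (hsub ht)).continuousWithinAt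
    have hmem : (1/2 : ℝ) ∈ uIcc (Real.sign (g t₀)) (Real.sign (g t₁)) := by
      rw [h0]
      exact mem_uIcc.2 (Or.inr ⟨by linarith, by norm_num⟩)
    obtain ⟨z, _, hz'⟩ := intermediate_value_uIcc hconts hmem
    have hz2 : Real.sign (g z) = 1/2 := hz'
    rcases Real.sign_apply_eq (g z) with hsg | hsg | hsg <;> rw [hz2] at hsg <;> norm_num at hsg
  · right
    push_neg at hex
    exact hex

lemma core_lemma (h l : ℝ → ℝ)
    (hint : IntegrableOn h (Ioc 0 1) volume)
    (hcont : ContinuousOn l (Icc 0 1))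
    (hl0 : l 0 = 0)
    (hincr : ∀ x y : ℝ, 0 ≤ x → x ≤ y → y ≤ 1 → l y - l x = ∫ t in Ioc x y, h t)
    (A : Set ℝ)
    (hA : A = {p : ℝ | p ∈ Ioc (0:ℝ) 1 ∧ ∀ q ∈ Ico (0:ℝ) p, l q < l p})
    (S : Finset ℝ) (hSsub : (S : Set ℝ) ⊆ Ioo 0 1)
    (hScont : ∀ t ∈ Ioo (0:ℝ) 1, t ∉ S → ContinuousAt (fun q => Real.sign (h q)) t) :
    ∀ p ∈ Icc (0:ℝ) 1,
      MeasurableSet (A ∩ Ioc 0 p) ∧ (∫ t in A ∩ Ioc 0 p, h t) = sSup (l '' Icc 0 p) := by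
  have hbase : MeasurableSet (A ∩ Ioc (0:ℝ) 0) ∧
      (∫ t in A ∩ Ioc (0:ℝ) 0, h t) = sSup (l '' Icc 0 0) := by
    rw [Ioc_self, inter_empty, Icc_self, image_singleton, csSup_singleton, hl0]
    exact ⟨MeasurableSet.empty, by simp⟩
  have main : ∀ n : ℕ, ∀ p : ℝ, 0 < p → p ≤ 1 → (S.filter (· < p)).card ≤ n →
      MeasurableSet (A ∩ Ioc 0 p) ∧ (∫ t in A ∩ Ioc 0 p, h t) = sSup (l '' Icc 0 p) := by
    intro n
    induction n with
    | zero =>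
      intro p hp0 hp1 hcard
      have hBe : S.filter (· < p) = ∅ := Finset.card_eq_zero.1 (Nat.le_zero.1 hcard)
      refine step_lemma h l hint hcont hincr A hA 0 p le_rfl hp0 hp1 ?_ hbase
      refine sign_const h 0 p (fun t ht => ?_)
      have ht1 : t ∈ Ioo (0:ℝ) 1 := ⟨ht.1, lt_of_lt_of_le ht.2 hp1⟩
      refine hScont t ht1 (fun htS => ?_)
      have : t ∈ S.filter (· < p) := Finset.mem_filter.2 ⟨htS, by simpa using ht.2⟩
      rw [hBe] at this
      exact absurd this (Finset.notMem_empty t)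
    | succ n ih =>
      intro p hp0 hp1 hcard
      rcases Finset.eq_empty_or_nonempty (S.filter (· < p)) with hBe | hBne
      · refine step_lemma h l hint hcont hincr A hA 0 p le_rfl hp0 hp1 ?_ hbase
        refine sign_const h 0 p (fun t ht => ?_)
        have ht1 : t ∈ Ioo (0:ℝ) 1 := ⟨ht.1, lt_of_lt_of_le ht.2 hp1⟩
        refine hScont t ht1 (fun htS => ?_)
        have : t ∈ S.filter (· < p) := Finset.mem_filter.2 ⟨htS, by simpa using ht.2⟩
        rw [hBe] at this
        exact absurd this (Finset.notMem_empty t)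
      · set b := (S.filter (· < p)).max' hBne with hbdef
        have hbmem : b ∈ S.filter (· < p) := Finset.max'_mem _ hBne
        have hbS : b ∈ S := (Finset.mem_filter.1 hbmem).1
        have hbp : b < p := by simpa using (Finset.mem_filter.1 hbmem).2
        have hbIoo : b ∈ Ioo (0:ℝ) 1 := hSsub hbS
        have hQb : MeasurableSet (A ∩ Ioc 0 b) ∧
            (∫ t in A ∩ Ioc 0 b, h t) = sSup (l '' Icc 0 b) := by
          refine ih b hbIoo.1 hbIoo.2.le ?_
          have hsub : S.filter (· < b) ⊆ (S.filter (· < p)).erase b := by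
            intro x hx
            obtain ⟨hxS, hxb⟩ := Finset.mem_filter.1 hx
            exact Finset.mem_erase.2 ⟨ne_of_lt hxb, Finset.mem_filter.2 ⟨hxS, hxb.trans hbp⟩⟩
          calc (S.filter (· < b)).card ≤ ((S.filter (· < p)).erase b).card :=
                Finset.card_le_card hsub
            _ = (S.filter (· < p)).card - 1 := Finset.card_erase_of_mem hbmem
            _ ≤ n := by omega
        refine step_lemma h l hint hcont hincr A hA b p hbIoo.1.le hbp hp1 ?_ hQb
        refine sign_const h b p (fun t ht => ?_)
        have ht1 : t ∈ Ioo (0:ℝ) 1 := ⟨hbIoo.1.trans ht.1, lt_of_lt_of_le ht.2 hp1⟩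
        refine hScont t ht1 (fun htS => ?_)
        have hmem : t ∈ S.filter (· < p) := Finset.mem_filter.2 ⟨htS, by simpa using ht.2⟩
        exact absurd (Finset.le_max' _ t hmem) (not_le.2 ht.1)
  intro p hp
  rcases eq_or_lt_of_le hp.1 with rfl | hp0
  · exact hbase
  · exact main (S.filter (· < p)).card p hp0 hp.2 le_rfl

end Det2

theorem stmt17' {Ω : Type*} [MeasurableSpace Ω] (P : Measure Ω) [IsProbabilityMeasure P]
    (X Y : Ω → ℝ) (hX : Integrable X P) (hY : Integrable Y P)
    (h l : ℝ → ℝ)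
    (hh : ∀ p, h p = qf P Y p - qf P X p)
    (hl : ∀ p, l p = (∫ t in (0:ℝ)..p, qf P Y t) - ∫ t in (0:ℝ)..p, qf P X t)
    (A : Set ℝ)
    (hA : A = {p : ℝ | p ∈ Set.Ioc (0:ℝ) 1 ∧ ∀ q ∈ Set.Ico (0:ℝ) p, l q < l p})
    (hsign : {p : ℝ | p ∈ Set.Ioo (0:ℝ) 1 ∧
      ¬ ContinuousWithinAt (fun q => Real.sign (h q)) (Set.Ioo (0:ℝ) 1) p}.Finite) :
    (∀ p ∈ Set.Icc (0:ℝ) 1,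
      (∫ t in A ∩ Set.Ioc (0:ℝ) p, h t) = sSup (l '' Set.Icc 0 p)) ∧
    (∫ t in A ∩ Set.Ioc (0:ℝ) 1, h t) = sSup (l '' Set.Icc 0 1) := by
  have hrest : volume.restrict (Ioc (0:ℝ) 1) = volume.restrict (Ioo 0 1) :=
    (Measure.restrict_congr_set Ioo_ae_eq_Ioc).symm
  have hIntOo : IntegrableOn h (Ioo 0 1) volume := by
    have hsum := (qf_integrableOn P Y hY).sub (qf_integrableOn P X hX)
    have hfun : h = fun t => qf P Y t - qf P X t := funext hh
    rw [hfun]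
    exact hsum
  have hInt : IntegrableOn h (Ioc 0 1) volume := by
    unfold IntegrableOn
    rw [hrest]
    exact hIntOo
  have hqfX : IntegrableOn (qf P X) (Ioc 0 1) volume := by
    unfold IntegrableOn; rw [hrest]; exact qf_integrableOn P X hX
  have hqfY : IntegrableOn (qf P Y) (Ioc 0 1) volume := by
    unfold IntegrableOn; rw [hrest]; exact qf_integrableOn P Y hY
  have hii : ∀ g : ℝ → ℝ, IntegrableOn g (Ioc 0 1) volume → ∀ p : ℝ, 0 ≤ p → p ≤ 1 →
      IntervalIntegrable g volume 0 p := fun g hg p h0 h1 =>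
    (intervalIntegrable_iff_integrableOn_Ioc_of_le h0).2 (hg.mono_set (Ioc_subset_Ioc le_rfl h1))
  have hlEq : ∀ p : ℝ, 0 ≤ p → p ≤ 1 → l p = ∫ t in (0:ℝ)..p, h t := by
    intro p h0 h1
    rw [hl p, ← intervalIntegral.integral_sub (hii _ hqfY p h0 h1) (hii _ hqfX p h0 h1)]
    exact intervalIntegral.integral_congr (fun t _ => (hh t).symm)
  have hl0 : l 0 = 0 := by rw [hlEq 0 le_rfl zero_le_one, intervalIntegral.integral_same]
  have hincr : ∀ x y : ℝ, 0 ≤ x → x ≤ y → y ≤ 1 → l y - l x = ∫ t in Ioc x y, h t := by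
    intro x y h0 hxy h1
    rw [hlEq x h0 (hxy.trans h1), hlEq y (h0.trans hxy) h1,
      intervalIntegral.integral_interval_sub_left (hii _ hInt y (h0.trans hxy) h1)
        (hii _ hInt x h0 (hxy.trans h1))]
    exact intervalIntegral.integral_of_le hxy
  have hIcc : IntegrableOn h (Icc 0 1) volume := by
    unfold IntegrableOn
    rw [← Measure.restrict_congr_set Ioc_ae_eq_Icc]
    exact hInt
  have hcontl : ContinuousOn l (Icc 0 1) := by
    have hprim := intervalIntegral.continuousOn_primitive_interval (a := (0:ℝ)) (b := 1) (μ := volume) (f := h)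
      (by rw [uIcc_of_le zero_le_one]; exact hIcc)
    rw [uIcc_of_le zero_le_one] at hprim
    exact ContinuousOn.congr hprim (fun p hp => hlEq p hp.1 hp.2)
  set S := hsign.toFinset with hS
  have hSsub : (S : Set ℝ) ⊆ Ioo 0 1 := fun t ht => (hsign.mem_toFinset.1 ht).1
  have hScont : ∀ t ∈ Ioo (0:ℝ) 1, t ∉ S → ContinuousAt (fun q => Real.sign (h q)) t := by
    intro t ht htS
    have hnot : ¬(t ∈ Ioo (0:ℝ) 1 ∧
        ¬ContinuousWithinAt (fun q => Real.sign (h q)) (Ioo 0 1) t) :=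
      fun hmem => htS (hsign.mem_toFinset.2 hmem)
    push_neg at hnot
    exact (hnot ht).continuousAt (Ioo_mem_nhds ht.1 ht.2)
  have hmain := core_lemma h l hInt hcontl hl0 hincr A hA S hSsub hScont
  exact ⟨fun p hp => (hmain p hp).2, (hmain 1 ⟨zero_le_one, le_rfl⟩).2⟩


/-- under the finitely-many-sign-changes assumption,
`∫_{A ∩ (0,p]} h(t) dt = sup_{q ∈ [0,p]} l(q)` for every `p ∈ [0,1]`; in particular for `p = 1`. -/
theorem stmt17 {Ω : Type*} [MeasurableSpace Ω] (P : Measure Ω) [IsProbabilityMeasure P]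
    (X Y : Ω → ℝ) (hX : Integrable X P) (hY : Integrable Y P)
    (h l : ℝ → ℝ)
    (hh : ∀ p, h p = qf P Y p - qf P X p)
    (hl : ∀ p, l p = lorenz P Y p - lorenz P X p)
    (A : Set ℝ)
    (hA : A = {p : ℝ | p ∈ Set.Ioc (0:ℝ) 1 ∧ ∀ q ∈ Set.Ico (0:ℝ) p, l q < l p})
    (hsign : {p : ℝ | p ∈ Set.Ioo (0:ℝ) 1 ∧
      ¬ ContinuousWithinAt (fun q => Real.sign (h q)) (Set.Ioo (0:ℝ) 1) p}.Finite) :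
    (∀ p ∈ Set.Icc (0:ℝ) 1,
      (∫ t in A ∩ Set.Ioc (0:ℝ) p, h t) = sSup (l '' Set.Icc (0:ℝ) p)) ∧
    (∫ t in A ∩ Set.Ioc (0:ℝ) 1, h t) = sSup (l '' Set.Icc (0:ℝ) 1) := by
  exact stmt17' P X Y hX hY h l hh (fun p => hl p) A hA hsign

end
end
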